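/- arXiv:1707.01570 — 10 statements merged into one kernel-verified Lean document; each statement's English description precedes it below -/
import Mathlib

section
/- Let ν > 0, let f = h + conj(g) be a harmonic mapping on 𝔻, and let α ∈ 𝔻 with φ_α(z) = (z + α)/(1 + conj(α)·z). Then for every z ∈ 𝔻, (1−|z|²)^ν · √(|J_{f∘φ_α}(z)|) ≤ ((1+|α|)/(1−|α|))^{|ν−1|} · β*_ν(f), where f ∘ φ_α = (h ∘ φ_α) + conj(g ∘ φ_α); in particular, if β*_ν(f) < ∞ then β*_ν(f ∘ φ_α) < ∞, i.e. the class of harmonic ν-Bloch-type mappings is linear invariant. -/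
open Complex Metric

private lemma rpow_abs_le' {x r : ℝ} (hx : 0 < x) (hr : 1 ≤ r) (h1 : x ≤ r)
    (h2 : r⁻¹ ≤ x) (t : ℝ) : x ^ t ≤ r ^ |t| := by
  have hr0 : (0:ℝ) < r := lt_of_lt_of_le zero_lt_one hr
  rcases le_or_gt 0 t with ht | ht
  · rw [_root_.abs_of_nonneg ht]
    exact Real.rpow_le_rpow hx.le h1 ht
  · rw [_root_.abs_of_neg ht]
    have hx' : x ^ t = (x⁻¹) ^ (-t) := by
      rw [Real.inv_rpow hx.le, ← Real.rpow_neg hx.le, neg_neg]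
    have hinv : x⁻¹ ≤ r := by rw [inv_le_comm₀ hx hr0]; exact h2
    rw [hx']
    exact Real.rpow_le_rpow (by positivity) hinv (by linarith)

/-- Linear invariance of harmonic ν-Bloch-type mappings:
for a harmonic mapping `f = h + conj g` on the unit disk, `α ∈ 𝔻`, and
`φ_α(z) = (z + α)/(1 + conj α · z)`, if `β*_ν(f) ≤ M` then for every `z ∈ 𝔻`,
`(1−|z|²)^ν √|J_{f∘φ_α}(z)| ≤ ((1+|α|)/(1−|α|))^{|ν−1|} · M`. -/
theorem linear_invariance_harmonic_nu_Bloch_type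
    (ν : ℝ) (hν : 0 < ν) (h g : ℂ → ℂ)
    (hh : DifferentiableOn ℂ h (ball 0 1))
    (hg : DifferentiableOn ℂ g (ball 0 1))
    (hg0 : g 0 = 0)
    (α : ℂ) (hα : α ∈ ball (0 : ℂ) 1) (M : ℝ)
    (hM : ∀ z ∈ ball (0 : ℂ) 1,
      (1 - ‖z‖ ^ 2) ^ ν *
        Real.sqrt |‖deriv h z‖ ^ 2 - ‖deriv g z‖ ^ 2| ≤ M) :
    ∀ z ∈ ball (0 : ℂ) 1,
      (1 - ‖z‖ ^ 2) ^ ν *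
        Real.sqrt |‖deriv (fun w => h ((w + α) / (1 + (starRingEnd ℂ) α * w))) z‖ ^ 2
          - ‖deriv (fun w => g ((w + α) / (1 + (starRingEnd ℂ) α * w))) z‖ ^ 2|
      ≤ ((1 + ‖α‖) / (1 - ‖α‖)) ^ |ν - 1| * M := by
  intro z hz
  rw [mem_ball_zero_iff] at hz
  have hα' : ‖α‖ < 1 := by rwa [mem_ball_zero_iff] at hα
  have ha0 : 0 ≤ ‖α‖ := norm_nonneg α
  have hz0 : 0 ≤ ‖z‖ := norm_nonneg z
  -- denominator bounds
  have hDub : ‖1 + (starRingEnd ℂ) α * z‖ ≤ 1 + ‖α‖ := by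
    have t := norm_add_le (1 : ℂ) ((starRingEnd ℂ) α * z)
    simp only [norm_mul, Complex.norm_conj, norm_one] at t
    nlinarith
  have hDlb : 1 - ‖α‖ ≤ ‖1 + (starRingEnd ℂ) α * z‖ := by
    have t := norm_sub_le (1 + (starRingEnd ℂ) α * z) ((starRingEnd ℂ) α * z)
    simp only [add_sub_cancel_right, norm_mul, Complex.norm_conj,
      norm_one] at t
    nlinarith
  have hDpos : 0 < ‖1 + (starRingEnd ℂ) α * z‖ := by linarith
  have hDne : (1 + (starRingEnd ℂ) α * z) ≠ 0 := by
    intro hc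
    rw [hc] at hDpos
    simp at hDpos
  -- the derivative of the Möbius map
  have hφ : HasDerivAt (fun y : ℂ => (y + α) / (1 + (starRingEnd ℂ) α * y))
      ((1 - (starRingEnd ℂ) α * α) / (1 + (starRingEnd ℂ) α * z) ^ 2) z := by
    have h1 : HasDerivAt (fun y : ℂ => y + α) 1 z := (hasDerivAt_id z).add_const α
    have h2 : HasDerivAt (fun y : ℂ => 1 + (starRingEnd ℂ) α * y) ((starRingEnd ℂ) α) z := by
      simpa using ((hasDerivAt_id z).const_mul ((starRingEnd ℂ) α)).const_add 1
    have := h1.div h2 hDne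
    exact this.congr_deriv (by ring)
  set p : ℝ := ‖(1 - (starRingEnd ℂ) α * α) / (1 + (starRingEnd ℂ) α * z) ^ 2‖
    with hp
  have hp_abs : p = (1 - ‖α‖ ^ 2) / (‖1 + (starRingEnd ℂ) α * z‖) ^ 2 := by
    rw [hp, norm_div, norm_pow]
    congr 1
    rw [show (1 : ℂ) - (starRingEnd ℂ) α * α = ((1 - ‖α‖ ^ 2 : ℝ) : ℂ) by
      rw [show (starRingEnd ℂ) α * α = (Complex.normSq α : ℂ) by
        rw [mul_comm, Complex.mul_conj], ← Complex.sq_norm]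
      push_cast; ring]
    rw [Complex.norm_real, Real.norm_eq_abs, _root_.abs_of_nonneg (by nlinarith)]
  have hp_pos : 0 < p := by
    rw [hp_abs]; apply div_pos (by nlinarith) (by positivity)
  have hr1 : (1:ℝ) ≤ (1 + ‖α‖) / (1 - ‖α‖) := by
    rw [le_div_iff₀ (by linarith)]; linarith
  have hp_le : p ≤ (1 + ‖α‖) / (1 - ‖α‖) := by
    rw [hp_abs, div_le_div_iff₀ (by positivity) (by linarith)]
    nlinarith [mul_self_le_mul_self (by linarith : (0:ℝ) ≤ 1 - ‖α‖) hDlb]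
  have hrinv_le : ((1 + ‖α‖) / (1 - ‖α‖))⁻¹ ≤ p := by
    rw [hp_abs, inv_div, div_le_div_iff₀ (by linarith) (by positivity)]
    nlinarith [mul_self_le_mul_self hDpos.le hDub]
  -- the image point
  set ω : ℂ := (z + α) / (1 + (starRingEnd ℂ) α * z) with hω
  have key : Complex.normSq (1 + (starRingEnd ℂ) α * z) - Complex.normSq (z + α)
      = (1 - Complex.normSq z) * (1 - Complex.normSq α) := by
    simp [Complex.normSq_apply, Complex.add_re, Complex.add_im, Complex.mul_re, Complex.mul_im]
    ring
  have hnsD_pos : 0 < Complex.normSq (1 + (starRingEnd ℂ) α * z) := by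
    rw [← Complex.sq_norm]; positivity
  have h1z : 0 < 1 - ‖z‖ ^ 2 := by nlinarith
  have hid : 1 - ‖ω‖ ^ 2 = (1 - ‖z‖ ^ 2) * p := by
    have e1 : (‖z‖) ^ 2 = Complex.normSq z := Complex.sq_norm z
    have e2 : (‖α‖) ^ 2 = Complex.normSq α := Complex.sq_norm α
    have e3 : (‖1 + (starRingEnd ℂ) α * z‖) ^ 2
        = Complex.normSq (1 + (starRingEnd ℂ) α * z) := Complex.sq_norm _
    rw [hω, Complex.sq_norm, map_div₀, hp_abs, e1, e2, e3]
    rw [← mul_div_assoc, eq_div_iff hnsD_pos.ne', sub_mul, div_mul_cancel₀ _ hnsD_pos.ne']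
    linarith [key]
  have hω_pos : 0 < 1 - ‖ω‖ ^ 2 := by rw [hid]; positivity
  have hω_mem : ω ∈ ball (0:ℂ) 1 := by
    rw [mem_ball_zero_iff]
    nlinarith [norm_nonneg ω]
  have hMw := hM ω hω_mem
  -- the derivatives of compositions
  have hh' : DifferentiableAt ℂ h ω := hh.differentiableAt (isOpen_ball.mem_nhds hω_mem)
  have hg' : DifferentiableAt ℂ g ω := hg.differentiableAt (isOpen_ball.mem_nhds hω_mem)
  have hdh : deriv (fun y => h ((y + α) / (1 + (starRingEnd ℂ) α * y))) z
      = deriv h ω * ((1 - (starRingEnd ℂ) α * α) / (1 + (starRingEnd ℂ) α * z) ^ 2) := by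
    have := (hh'.hasDerivAt.comp z hφ).deriv
    simpa [Function.comp_def] using this
  have hdg : deriv (fun y => g ((y + α) / (1 + (starRingEnd ℂ) α * y))) z
      = deriv g ω * ((1 - (starRingEnd ℂ) α * α) / (1 + (starRingEnd ℂ) α * z) ^ 2) := by
    have := (hg'.hasDerivAt.comp z hφ).deriv
    simpa [Function.comp_def] using this
  rw [hdh, hdg, norm_mul, norm_mul, ← hp]
  have hs : |(‖deriv h ω‖ * p) ^ 2 - (‖deriv g ω‖ * p) ^ 2|
      = p ^ 2 * |‖deriv h ω‖ ^ 2 - ‖deriv g ω‖ ^ 2| := by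
    rw [show (‖deriv h ω‖ * p) ^ 2 - (‖deriv g ω‖ * p) ^ 2
        = p ^ 2 * (‖deriv h ω‖ ^ 2 - ‖deriv g ω‖ ^ 2) by ring,
      abs_mul, _root_.abs_of_nonneg (sq_nonneg p)]
  rw [hs, Real.sqrt_mul (sq_nonneg p), Real.sqrt_sq hp_pos.le]
  have hpp : p ^ (1 - ν) * p ^ ν = p := by
    rw [← Real.rpow_add hp_pos]; simp
  rw [show p = p ^ (1 - ν) * p ^ ν from hpp.symm]
  calc (1 - ‖z‖ ^ 2) ^ ν * (p ^ (1 - ν) * p ^ ν *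
        Real.sqrt |‖deriv h ω‖ ^ 2 - ‖deriv g ω‖ ^ 2|)
      = p ^ (1 - ν) * (((1 - ‖z‖ ^ 2) * p) ^ ν *
        Real.sqrt |‖deriv h ω‖ ^ 2 - ‖deriv g ω‖ ^ 2|) := by
        rw [Real.mul_rpow h1z.le hp_pos.le]; ring
    _ = p ^ (1 - ν) * ((1 - ‖ω‖ ^ 2) ^ ν *
        Real.sqrt |‖deriv h ω‖ ^ 2 - ‖deriv g ω‖ ^ 2|) := by
        rw [← hid]
    _ ≤ ((1 + ‖α‖) / (1 - ‖α‖)) ^ |ν - 1| * M := by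
        apply mul_le_mul _ hMw
          (mul_nonneg (Real.rpow_nonneg hω_pos.le ν) (Real.sqrt_nonneg _))
          (Real.rpow_nonneg (by positivity) _)
        have := rpow_abs_le' hp_pos hr1 hp_le hrinv_le (1 - ν)
        rwa [abs_sub_comm] at this
end

section
/- For every ν > 0: (i) every harmonic mapping f = h + conj(g) on 𝔻 satisfies β*_ν(f) ≤ β_ν(f), so every harmonic ν-Bloch mapping is a harmonic ν-Bloch-type mapping; and (ii) there exists a sense-preserving harmonic mapping f = h + conj(g) on 𝔻 with β*_ν(f) < ∞ and β_ν(f) = ∞. Hence the inclusion of the harmonic ν-Bloch space in the harmonic ν-Bloch-type class is strict. -/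
open Complex Metric

lemma slit_of_ball {z : ℂ} (hz : z ∈ ball (0:ℂ) 1) : (1 - z) ∈ Complex.slitPlane := by
  rw [mem_ball, dist_zero_right] at hz
  left
  simp only [Complex.sub_re, Complex.one_re]
  have : z.re ≤ ‖z‖ := Complex.re_le_norm z
  linarith [hz, this]

lemma hasDerivAt_h (c : ℂ) {z : ℂ} (hz : z ∈ ball (0:ℂ) 1) :
    HasDerivAt (fun w => (1 - w) ^ c) (-(c * (1 - z) ^ (c - 1))) z := by
  have := (HasDerivAt.cpow_const ((hasDerivAt_id z).const_sub 1) (slit_of_ball hz) (c := c))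
  simpa using this

lemma hasDerivAt_g (c : ℂ) (hc : c + 1 ≠ 0) {z : ℂ} (hz : z ∈ ball (0:ℂ) 1) :
    HasDerivAt (fun w => w * (1 - w) ^ c + ((1 - w) ^ (c + 1) - 1) / (c + 1))
      (z * -(c * (1 - z) ^ (c - 1))) z := by
  have hne : (1:ℂ) - z ≠ 0 := Complex.slitPlane_ne_zero (slit_of_ball hz)
  have h1 : HasDerivAt (fun w : ℂ => w * (1 - w) ^ c)
      (1 * (1 - z) ^ c + z * -(c * (1 - z) ^ (c - 1))) z :=
    (hasDerivAt_id z).mul (hasDerivAt_h c hz)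
  have h2 : HasDerivAt (fun w : ℂ => ((1 - w) ^ (c + 1) - 1) / (c + 1))
      ((-(((c+1)) * (1 - z) ^ (c + 1 - 1))) / (c + 1)) z := by
    exact (((hasDerivAt_h (c+1) hz)).sub_const 1).div_const (c+1)
  have := h1.add h2
  convert this using 1
  · rfl
  · rfl
  · rfl
  have e1 : c + 1 - 1 = c := by ring
  rw [e1]
  have e2 : (1 - z) ^ c = (1 - z) ^ (c - 1) * (1 - z) := by
    conv_lhs => rw [show c = c - 1 + 1 by ring, Complex.cpow_add _ _ hne, Complex.cpow_one]
  field_simp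
  ring

lemma abs_one_sub_pos {z : ℂ} (hz : z ∈ ball (0:ℂ) 1) :
    1 - ‖z‖ ≤ ‖1 - z‖ ∧ 0 < 1 - ‖z‖ := by
  rw [mem_ball, dist_zero_right] at hz
  constructor
  · have h := norm_add_le (1 - z) z
    simp only [sub_add_cancel, norm_one] at h
    linarith
  · linarith

lemma partII (ν t : ℝ) (hν : 0 < ν) (ht0 : 0 < t) (ht : t ≤ 1/2)
    (ha1 : ν + t ≠ 1) (ha2 : ν + t ≠ 2) :
    ∃ h g : ℂ → ℂ,
      DifferentiableOn ℂ h (ball 0 1) ∧ DifferentiableOn ℂ g (ball 0 1) ∧ g 0 = 0 ∧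
      (∀ z ∈ ball (0 : ℂ) 1, ‖deriv g z‖ < ‖deriv h z‖) ∧
      (∃ M : ℝ, ∀ z ∈ ball (0 : ℂ) 1,
        (1 - ‖z‖ ^ 2) ^ ν *
          Real.sqrt |‖deriv h z‖ ^ 2 - ‖deriv g z‖ ^ 2| ≤ M) ∧
      ¬ (∃ M : ℝ, ∀ z ∈ ball (0 : ℂ) 1,
        (1 - ‖z‖ ^ 2) ^ ν *
          (‖deriv h z‖ + ‖deriv g z‖) ≤ M) := by
  set a : ℝ := ν + t with ha
  set β : ℝ := 1 - a with hβ
  have hβ0 : β ≠ 0 := by simp [hβ]; exact fun h => ha1 (by linarith)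
  have hβ1 : (β : ℝ) + 1 ≠ 0 := by
    simp only [hβ]; intro h; exact ha2 (by linarith)
  set c : ℂ := (β : ℂ) with hc
  have hc1 : c + 1 ≠ 0 := by
    rw [hc, show (β:ℂ) + 1 = ((β + 1 : ℝ) : ℂ) by push_cast; ring]
    exact_mod_cast hβ1
  have hcm1 : c - 1 = ((-a : ℝ) : ℂ) := by rw [hc, hβ]; push_cast; ring
  set h : ℂ → ℂ := fun w => (1 - w) ^ c with hh
  set g : ℂ → ℂ := fun w => w * (1 - w) ^ c + ((1 - w) ^ (c + 1) - 1) / (c + 1) with hg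
  -- derivative values
  have hdh : ∀ z ∈ ball (0:ℂ) 1, deriv h z = -(c * (1 - z) ^ (c - 1)) := fun z hz =>
    (hasDerivAt_h c hz).deriv
  have hdg : ∀ z ∈ ball (0:ℂ) 1, deriv g z = z * -(c * (1 - z) ^ (c - 1)) := fun z hz =>
    (hasDerivAt_g c hc1 hz).deriv
  have habsh : ∀ z ∈ ball (0:ℂ) 1,
      ‖deriv h z‖ = |β| * ‖1 - z‖ ^ (-a) := by
    intro z hz
    rw [hdh z hz, norm_neg, norm_mul, hcm1, Complex.norm_cpow_real, hc,
      Complex.norm_real, Real.norm_eq_abs]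
  have habsg : ∀ z ∈ ball (0:ℂ) 1,
      ‖deriv g z‖ = ‖z‖ * ‖deriv h z‖ := by
    intro z hz
    rw [hdg z hz, hdh z hz, norm_mul]
  have hhpos : ∀ z ∈ ball (0:ℂ) 1, 0 < ‖deriv h z‖ := by
    intro z hz
    rw [habsh z hz]
    have := (abs_one_sub_pos hz)
    exact mul_pos (abs_pos.mpr hβ0) (Real.rpow_pos_of_pos (lt_of_lt_of_le this.2 this.1) _)
  refine ⟨h, g, ?_, ?_, ?_, ?_, ?_, ?_⟩
  · intro z hz
    exact ((hasDerivAt_h c hz).differentiableAt).differentiableWithinAt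
  · intro z hz
    exact ((hasDerivAt_g c hc1 hz).differentiableAt).differentiableWithinAt
  · simp [hg, Complex.one_cpow]
  · intro z hz
    rw [habsg z hz]
    have h1 : ‖z‖ < 1 := by rwa [mem_ball, dist_zero_right] at hz
    calc ‖z‖ * ‖deriv h z‖ < 1 * ‖deriv h z‖ :=
          mul_lt_mul_of_pos_right h1 (hhpos z hz)
      _ = ‖deriv h z‖ := one_mul _
  · -- bounded Bloch-type norm
    refine ⟨|β| * 2 ^ a, ?_⟩
    intro z hz
    have hA1 : ‖z‖ < 1 := by rwa [mem_ball, dist_zero_right] at hz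
    have hA0 : 0 ≤ ‖z‖ := norm_nonneg z
    set A := ‖z‖
    have hs0 : 0 < 1 - A ^ 2 := by nlinarith
    have hs1 : 1 - A ^ 2 ≤ 1 := by nlinarith
    have key : |‖deriv h z‖ ^ 2 - ‖deriv g z‖ ^ 2|
        = ‖deriv h z‖ ^ 2 * (1 - A ^ 2) := by
      rw [habsg z hz, _root_.abs_of_nonneg (by nlinarith [(hhpos z hz).le, hA0, hA1])]
      ring
    rw [key, Real.sqrt_mul (sq_nonneg _), Real.sqrt_sq (hhpos z hz).le, habsh z hz,
      Real.sqrt_eq_rpow]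
    have hb := abs_one_sub_pos hz
    have hB0 : 0 < ‖1 - z‖ := lt_of_lt_of_le hb.2 hb.1
    have hhalf : (1 - A ^ 2) / 2 ≤ ‖1 - z‖ := by nlinarith [hb.1, hb.2]
    have h1 : ‖1 - z‖ ^ (-a) ≤ ((1 - A ^ 2) / 2) ^ (-a) :=
      Real.rpow_le_rpow_of_nonpos (by positivity) hhalf (by simp [ha]; linarith)
    have h2 : ((1 - A ^ 2) / 2) ^ (-a) = (1 - A ^ 2) ^ (-a) * 2 ^ a := by
      rw [Real.div_rpow hs0.le (by norm_num), Real.rpow_neg (by norm_num : (0:ℝ) ≤ 2)]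
      field_simp
    calc (1 - A ^ 2) ^ ν * (|β| * ‖1 - z‖ ^ (-a) * (1 - A ^ 2) ^ ((1:ℝ) / 2))
        ≤ (1 - A ^ 2) ^ ν * (|β| * ((1 - A ^ 2) ^ (-a) * 2 ^ a) * (1 - A ^ 2) ^ ((1:ℝ) / 2)) := by
          apply mul_le_mul_of_nonneg_left _ (by positivity)
          apply mul_le_mul_of_nonneg_right _ (by positivity)
          exact mul_le_mul_of_nonneg_left (h2 ▸ h1) (abs_nonneg β)
      _ = |β| * 2 ^ a * (1 - A ^ 2) ^ (ν + -a + (1:ℝ) / 2) := by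
          rw [Real.rpow_add hs0, Real.rpow_add hs0]; ring
      _ ≤ |β| * 2 ^ a * 1 := by
          apply mul_le_mul_of_nonneg_left _ (by positivity)
          apply Real.rpow_le_one hs0.le hs1
          simp only [ha]
          linarith
      _ = |β| * 2 ^ a := mul_one _
  · -- unbounded Bloch norm
    rintro ⟨M, hM⟩
    have h00 : (0:ℂ) ∈ ball (0:ℂ) 1 := by simp
    have hM0 : |β| ≤ M := by
      have := hM 0 h00
      rw [habsh 0 h00, habsg 0 h00] at this
      simpa using this
    have hβpos : 0 < |β| := abs_pos.mpr hβ0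
    have hMpos : 0 < M := lt_of_lt_of_le hβpos hM0
    set ε : ℝ := (|β| / (2 * M)) ^ t⁻¹ with hε
    have hb1 : 0 < |β| / (2 * M) := by positivity
    have hb2 : |β| / (2 * M) ≤ 1 := by
      rw [div_le_one (by positivity)]; linarith
    have hε0 : 0 < ε := Real.rpow_pos_of_pos hb1 _
    have hε1 : ε ≤ 1 := Real.rpow_le_one hb1.le hb2 (by positivity)
    have hεt : ε ^ t = |β| / (2 * M) := by
      rw [hε, ← Real.rpow_mul hb1.le, inv_mul_cancel₀ ht0.ne', Real.rpow_one]
    set r : ℝ := 1 - ε with hr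
    have hr0 : 0 ≤ r := by linarith
    have hr1 : r < 1 := by linarith
    have hzb : (r : ℂ) ∈ ball (0:ℂ) 1 := by
      rw [mem_ball, dist_zero_right, Complex.norm_real, Real.norm_eq_abs,
        _root_.abs_of_nonneg hr0]
      exact hr1
    have hAr : ‖(r : ℂ)‖ = r := by
      rw [Complex.norm_real, Real.norm_eq_abs, _root_.abs_of_nonneg hr0]
    have habs1r : ‖1 - (r:ℂ)‖ = ε := by
      rw [show (1:ℂ) - (r:ℝ) = ((1 - r : ℝ) : ℂ) by push_cast; ring, Complex.norm_real, Real.norm_eq_abs,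
        _root_.abs_of_nonneg (by linarith : (0:ℝ) ≤ 1 - r), hr]
      ring
    have hlow : |β| * ε ^ (-t) ≤ (1 - ‖(r:ℂ)‖ ^ 2) ^ ν *
        (‖deriv h (r:ℂ)‖ + ‖deriv g (r:ℂ)‖) := by
      have hs : 1 - r ^ 2 = ε * (1 + r) := by rw [hr]; ring
      have h1r : (1:ℝ) ≤ 1 + r := by linarith
      calc |β| * ε ^ (-t)
          = |β| * (ε ^ ν * ε ^ (-a)) := by
            rw [← Real.rpow_add hε0, show ν + -a = -t from by simp only [ha]; ring]
        _ ≤ (ε ^ ν * (1 + r) ^ ν) * (|β| * ε ^ (-a)) := by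
            have : (1:ℝ) ≤ (1 + r) ^ ν := Real.one_le_rpow h1r hν.le
            nlinarith [Real.rpow_pos_of_pos hε0 ν, Real.rpow_pos_of_pos hε0 (-a),
              hβpos, mul_pos (Real.rpow_pos_of_pos hε0 ν) (mul_pos hβpos (Real.rpow_pos_of_pos hε0 (-a)))]
        _ = (1 - r ^ 2) ^ ν * (|β| * ε ^ (-a)) := by
            rw [hs, Real.mul_rpow hε0.le (by linarith)]
        _ ≤ (1 - ‖(r:ℂ)‖ ^ 2) ^ ν *
              (‖deriv h (r:ℂ)‖ + ‖deriv g (r:ℂ)‖) := by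
            rw [hAr, habsh _ hzb, habs1r]
            have : 0 ≤ ‖deriv g (r:ℂ)‖ := norm_nonneg _
            nlinarith [Real.rpow_pos_of_pos (show (0:ℝ) < 1 - r^2 by nlinarith) ν]
    have hcontr : 2 * M ≤ (1 - ‖(r:ℂ)‖ ^ 2) ^ ν *
        (‖deriv h (r:ℂ)‖ + ‖deriv g (r:ℂ)‖) := by
      refine le_trans ?_ hlow
      rw [Real.rpow_neg hε0.le]
      rw [hεt]
      field_simp
      exact le_rfl
    have := hM (r:ℂ) hzb
    linarith

/-- For every ν > 0:
(i) every harmonic mapping `f = h + conj g` on `𝔻` satisfies `β*_ν(f) ≤ β_ν(f)` pointwise,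
so every harmonic ν-Bloch mapping is a harmonic ν-Bloch-type mapping; and
(ii) there is a sense-preserving harmonic mapping `f = h + conj g` with `β*_ν(f) < ∞`
but `β_ν(f) = ∞`. Hence the inclusion `𝓑_H(ν) ⊆ 𝓑*_H(ν)` is strict. -/
theorem nu_Bloch_subset_nu_Bloch_type_strict (ν : ℝ) (hν : 0 < ν) :
    (∀ h g : ℂ → ℂ, DifferentiableOn ℂ h (ball 0 1) → DifferentiableOn ℂ g (ball 0 1) →
      g 0 = 0 →
      (∀ z ∈ ball (0 : ℂ) 1,
        (1 - ‖z‖ ^ 2) ^ ν *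
          Real.sqrt |‖deriv h z‖ ^ 2 - ‖deriv g z‖ ^ 2|
        ≤ (1 - ‖z‖ ^ 2) ^ ν *
            (‖deriv h z‖ + ‖deriv g z‖)) ∧
      ((∃ M : ℝ, ∀ z ∈ ball (0 : ℂ) 1,
          (1 - ‖z‖ ^ 2) ^ ν *
            (‖deriv h z‖ + ‖deriv g z‖) ≤ M) →
        (∃ M : ℝ, ∀ z ∈ ball (0 : ℂ) 1,
          (1 - ‖z‖ ^ 2) ^ ν *
            Real.sqrt |‖deriv h z‖ ^ 2 - ‖deriv g z‖ ^ 2| ≤ M))) ∧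
    (∃ h g : ℂ → ℂ,
      DifferentiableOn ℂ h (ball 0 1) ∧ DifferentiableOn ℂ g (ball 0 1) ∧ g 0 = 0 ∧
      (∀ z ∈ ball (0 : ℂ) 1, ‖deriv g z‖ < ‖deriv h z‖) ∧
      (∃ M : ℝ, ∀ z ∈ ball (0 : ℂ) 1,
        (1 - ‖z‖ ^ 2) ^ ν *
          Real.sqrt |‖deriv h z‖ ^ 2 - ‖deriv g z‖ ^ 2| ≤ M) ∧
      ¬ (∃ M : ℝ, ∀ z ∈ ball (0 : ℂ) 1,
        (1 - ‖z‖ ^ 2) ^ ν *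
          (‖deriv h z‖ + ‖deriv g z‖) ≤ M)) := by
  constructor
  · intro h g _ _ _
    have key : ∀ z ∈ ball (0 : ℂ) 1,
        (1 - ‖z‖ ^ 2) ^ ν *
          Real.sqrt |‖deriv h z‖ ^ 2 - ‖deriv g z‖ ^ 2|
        ≤ (1 - ‖z‖ ^ 2) ^ ν *
            (‖deriv h z‖ + ‖deriv g z‖) := by
      intro z hz
      have hA1 : ‖z‖ < 1 := by rwa [mem_ball, dist_zero_right] at hz
      have hs0 : (0:ℝ) ≤ 1 - ‖z‖ ^ 2 := by
        nlinarith [norm_nonneg z]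
      apply mul_le_mul_of_nonneg_left _ (Real.rpow_nonneg hs0 ν)
      set x := ‖deriv h z‖
      set y := ‖deriv g z‖
      have hx : 0 ≤ x := norm_nonneg _
      have hy : 0 ≤ y := norm_nonneg _
      have h1 : |x ^ 2 - y ^ 2| ≤ (x + y) ^ 2 :=
        abs_le.mpr ⟨by nlinarith, by nlinarith⟩
      calc Real.sqrt |x ^ 2 - y ^ 2| ≤ Real.sqrt ((x + y) ^ 2) := Real.sqrt_le_sqrt h1
        _ = x + y := Real.sqrt_sq (by linarith)
    refine ⟨key, ?_⟩
    rintro ⟨M, hM⟩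
    exact ⟨M, fun z hz => le_trans (key z hz) (hM z hz)⟩
  · by_cases hcase : ν = 1/2 ∨ ν = 3/2
    · refine partII ν (1/4) hν (by norm_num) (by norm_num) ?_ ?_ <;>
        rcases hcase with rfl | rfl <;> norm_num
    · push_neg at hcase
      refine partII ν (1/2) hν (by norm_num) (by norm_num) ?_ ?_
      · intro h; exact hcase.1 (by linarith)
      · intro h; exact hcase.2 (by linarith)
end

section
/- Let ν > 0 and let f = h + conj(g) be a harmonic mapping on 𝔻. Then β_ν(f) < ∞ if and only if both β*_ν(f) < ∞ and at least one of sup_{z∈𝔻}(1−|z|²)^ν|h'(z)| < ∞ or sup_{z∈𝔻}(1−|z|²)^ν|g'(z)| < ∞ holds. Equivalently, the harmonic ν-Bloch-type mappings that are not harmonic ν-Bloch mappings are exactly those f = h + conj(g) with β*_ν(f) < ∞ for which neither h nor g belongs to the analytic ν-Bloch space. -/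
open Complex Metric

private lemma aux_back (M1 M2 w a b : ℝ) (hw : 0 ≤ w) (ha : 0 ≤ a) (hb : 0 ≤ b)
    (h1 : w * Real.sqrt |a ^ 2 - b ^ 2| ≤ M1) (h2 : w * a ≤ M2) :
    w * (a + b) ≤ M2 + Real.sqrt (M1 ^ 2 + M2 ^ 2) := by
  have hs : 0 ≤ Real.sqrt |a ^ 2 - b ^ 2| := Real.sqrt_nonneg _
  have hM1 : 0 ≤ M1 := le_trans (mul_nonneg hw hs) h1
  have hM2 : 0 ≤ M2 := le_trans (mul_nonneg hw ha) h2
  have hsq : (Real.sqrt |a ^ 2 - b ^ 2|) ^ 2 = |a ^ 2 - b ^ 2| :=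
    Real.sq_sqrt (abs_nonneg _)
  have key : (w * b) ^ 2 ≤ M1 ^ 2 + M2 ^ 2 := by
    have h1' : (w * Real.sqrt |a ^ 2 - b ^ 2|) ^ 2 ≤ M1 ^ 2 :=
      pow_le_pow_left₀ (mul_nonneg hw hs) h1 2
    have h2' : (w * a) ^ 2 ≤ M2 ^ 2 := pow_le_pow_left₀ (mul_nonneg hw ha) h2 2
    have hb2 : b ^ 2 ≤ a ^ 2 + |a ^ 2 - b ^ 2| := by
      cases abs_cases (a ^ 2 - b ^ 2) with
      | inl hcase => nlinarith [hcase.1]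
      | inr hcase => nlinarith [hcase.1]
    nlinarith [sq_nonneg w, mul_pow w (Real.sqrt |a ^ 2 - b ^ 2|) 2, hsq,
      mul_le_mul_of_nonneg_left hb2 (sq_nonneg w)]
  have hwb : w * b ≤ Real.sqrt (M1 ^ 2 + M2 ^ 2) := by
    have := Real.sqrt_le_sqrt key
    rwa [Real.sqrt_sq (mul_nonneg hw hb)] at this
  nlinarith

/-- For a harmonic mapping `f = h + conj g` on `𝔻` and ν > 0:
`β_ν(f) < ∞` if and only if `β*_ν(f) < ∞` and at least one of `h`, `g` belongs to
the analytic ν-Bloch space. -/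
theorem harmonic_nu_Bloch_iff_Bloch_type_and_component
    (ν : ℝ) (hν : 0 < ν) (h g : ℂ → ℂ)
    (hh : DifferentiableOn ℂ h (ball 0 1))
    (hg : DifferentiableOn ℂ g (ball 0 1))
    (hg0 : g 0 = 0) :
    (∃ M : ℝ, ∀ z ∈ ball (0 : ℂ) 1,
      (1 - ‖z‖ ^ 2) ^ ν *
        (‖deriv h z‖ + ‖deriv g z‖) ≤ M) ↔
    ((∃ M : ℝ, ∀ z ∈ ball (0 : ℂ) 1,
        (1 - ‖z‖ ^ 2) ^ ν *
          Real.sqrt |‖deriv h z‖ ^ 2 - ‖deriv g z‖ ^ 2| ≤ M) ∧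
      ((∃ M : ℝ, ∀ z ∈ ball (0 : ℂ) 1,
          (1 - ‖z‖ ^ 2) ^ ν * ‖deriv h z‖ ≤ M) ∨
        (∃ M : ℝ, ∀ z ∈ ball (0 : ℂ) 1,
          (1 - ‖z‖ ^ 2) ^ ν * ‖deriv g z‖ ≤ M))) := by
  have hwpos : ∀ z ∈ ball (0 : ℂ) 1, 0 ≤ (1 - ‖z‖ ^ 2) ^ ν := by
    intro z hz
    apply Real.rpow_nonneg
    have : ‖z‖ < 1 := by simpa using hz
    nlinarith [norm_nonneg z]
  constructor
  · rintro ⟨M, hM⟩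
    constructor
    · refine ⟨M, fun z hz => ?_⟩
      have hb := hM z hz
      set a := ‖deriv h z‖
      set b := ‖deriv g z‖
      have ha0 : 0 ≤ a := norm_nonneg _
      have hb0 : 0 ≤ b := norm_nonneg _
      have hle : Real.sqrt |a ^ 2 - b ^ 2| ≤ a + b := by
        have habs : |a ^ 2 - b ^ 2| ≤ (a + b) ^ 2 := by
          cases abs_cases (a ^ 2 - b ^ 2) with
          | inl hc => nlinarith [hc.1]
          | inr hc => nlinarith [hc.1]
        calc Real.sqrt |a ^ 2 - b ^ 2| ≤ Real.sqrt ((a + b) ^ 2) :=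
              Real.sqrt_le_sqrt habs
          _ = a + b := Real.sqrt_sq (by linarith)
      exact le_trans (mul_le_mul_of_nonneg_left hle (hwpos z hz)) hb
    · refine Or.inl ⟨M, fun z hz => ?_⟩
      have hb := hM z hz
      have : (1 - ‖z‖ ^ 2) ^ ν * ‖deriv h z‖ ≤
          (1 - ‖z‖ ^ 2) ^ ν *
            (‖deriv h z‖ + ‖deriv g z‖) := by
        apply mul_le_mul_of_nonneg_left _ (hwpos z hz)
        have := norm_nonneg (deriv g z)
        linarith
      linarith
  · rintro ⟨⟨M1, h1⟩, h2 | h2⟩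
    · obtain ⟨M2, hM2⟩ := h2
      refine ⟨M2 + Real.sqrt (M1 ^ 2 + M2 ^ 2), fun z hz => ?_⟩
      exact aux_back M1 M2 _ _ _ (hwpos z hz) (norm_nonneg _)
        (norm_nonneg _) (h1 z hz) (hM2 z hz)
    · obtain ⟨M2, hM2⟩ := h2
      refine ⟨M2 + Real.sqrt (M1 ^ 2 + M2 ^ 2), fun z hz => ?_⟩
      have h1' := h1 z hz
      rw [abs_sub_comm] at h1'
      have := aux_back M1 M2 _ _ _ (hwpos z hz) (norm_nonneg _)
        (norm_nonneg _) h1' (hM2 z hz)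
      linarith [this]
end

section
/- Let ν > 0 and let f = h + conj(g) be a sense-preserving harmonic mapping on 𝔻 with β*_ν(f) < ∞ and dilatation ω_f = g'/h'. Then for every z ∈ 𝔻, |g'(z)| < |h'(z)| ≤ (β*_ν(f)/(1−|z|²)^{ν+1/2}) · √((1 + |ω_f(0)|)/(1 − |ω_f(0)|)). -/
open Complex Metric

lemma real_key_sp (a r x : ℝ) (ha0 : 0 ≤ a) (ha : a < 1) (hr0 : 0 ≤ r) (hr : r < 1)
    (hx0 : 0 ≤ x)
    (hQ : x^2 + a^2 - r^2 - r^2*a^2*x^2 ≤ 2*a*x*(1-r^2)) :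
    (1-r^2)*(1-a) ≤ (1-x^2)*(1+a) := by
  have har : a*r < 1 := by nlinarith
  have hpos : (0:ℝ) < 1 + a*r := by nlinarith
  have hfac : (x*(1+a*r)-(a+r))*(x*(1-a*r)-(a-r)) ≤ 0 := by nlinarith [hQ]
  have h1 : x*(1+a*r) ≤ a + r := by
    by_contra hcon
    push_neg at hcon
    have hm : (a+r)*(1-a*r) < x*(1+a*r)*(1-a*r) :=
      mul_lt_mul_of_pos_right hcon (by nlinarith)
    have hcmp : (a-r)*(1+a*r) ≤ (a+r)*(1-a*r) := by
      nlinarith [mul_nonneg hr0 (sub_nonneg.2 (show a^2 ≤ 1 by nlinarith))]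
    have h2 : a - r < x*(1-a*r) :=
      lt_of_mul_lt_mul_right (by nlinarith [hm, hcmp]) hpos.le
    nlinarith [mul_pos (sub_pos.2 hcon) (sub_pos.2 h2), hfac]
  have hx2 : x^2*(1+a*r)^2 ≤ (a+r)^2 := by
    nlinarith [mul_self_le_mul_self (by positivity : (0:ℝ) ≤ x*(1+a*r)) h1]
  have key : (1-r^2)*(1-a)*(1+a*r)^2 ≤ (1-x^2)*(1+a)*(1+a*r)^2 := by
    nlinarith [mul_le_mul_of_nonneg_left hx2 (show (0:ℝ) ≤ 1+a by linarith),
      mul_nonneg (mul_nonneg (mul_nonneg (mul_nonneg (sub_nonneg.2 ha.le)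
        (sub_nonneg.2 (show r^2 ≤ 1 by nlinarith))) ha0) (sub_nonneg.2 hr.le))
        (show (0:ℝ) ≤ 2+a+a*r by linarith)]
  exact le_of_mul_le_mul_right key (by positivity)

lemma normSq_one_sub_conj_mul (c u : ℂ) :
    normSq (1 - (starRingEnd ℂ) c * u) =
      1 + normSq c * normSq u - 2*(u * (starRingEnd ℂ) c).re := by
  simp [Complex.normSq_apply, Complex.mul_re, Complex.mul_im, Complex.sub_re, Complex.sub_im,
    Complex.conj_re, Complex.conj_im, Complex.one_re, Complex.one_im]
  ring

lemma mobius_denom_ne (c u : ℂ) (hc : ‖c‖ < 1) (hu : ‖u‖ < 1) :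
    1 - (starRingEnd ℂ) c * u ≠ 0 := by
  intro hcontra
  have h1 : (starRingEnd ℂ) c * u = 1 := by linear_combination -hcontra
  have := congrArg (‖·‖) h1
  rw [norm_mul, Complex.norm_conj, norm_one] at this
  nlinarith [norm_nonneg c, norm_nonneg u]

set_option maxHeartbeats 1000000 in
/-- If `f = h + conj g` is a sense-preserving harmonic mapping on `𝔻` with
`β*_ν(f) ≤ M` and dilatation `ω_f = g'/h'`, then for every `z ∈ 𝔻`,
`|g'(z)| < |h'(z)| ≤ (M/(1−|z|²)^{ν+1/2}) √((1+|ω_f(0)|)/(1−|ω_f(0)|))`. -/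
theorem derivative_bound_sense_preserving_Bloch_type
    (ν : ℝ) (hν : 0 < ν) (h g : ℂ → ℂ)
    (hh : DifferentiableOn ℂ h (ball 0 1))
    (hg : DifferentiableOn ℂ g (ball 0 1))
    (hg0 : g 0 = 0)
    (hsp : ∀ z ∈ ball (0 : ℂ) 1, ‖deriv g z‖ < ‖deriv h z‖)
    (M : ℝ)
    (hM : ∀ z ∈ ball (0 : ℂ) 1,
      (1 - ‖z‖ ^ 2) ^ ν *
        Real.sqrt |‖deriv h z‖ ^ 2 - ‖deriv g z‖ ^ 2| ≤ M) :
    ∀ z ∈ ball (0 : ℂ) 1,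
      ‖deriv g z‖ < ‖deriv h z‖ ∧
      ‖deriv h z‖
        ≤ M / (1 - ‖z‖ ^ 2) ^ (ν + 1 / 2) *
          Real.sqrt ((1 + ‖deriv g 0 / deriv h 0‖)
            / (1 - ‖deriv g 0 / deriv h 0‖)) := by
  -- derivatives are differentiable on the ball
  have hh' : DifferentiableOn ℂ (deriv h) (ball 0 1) :=
    ((hh.analyticOnNhd isOpen_ball).deriv).differentiableOn
  have hg' : DifferentiableOn ℂ (deriv g) (ball 0 1) :=
    ((hg.analyticOnNhd isOpen_ball).deriv).differentiableOn
  have hhpos : ∀ w ∈ ball (0:ℂ) 1, 0 < ‖deriv h w‖ := fun w hw =>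
    (norm_nonneg _).trans_lt (hsp w hw)
  have hne : ∀ w ∈ ball (0:ℂ) 1, deriv h w ≠ 0 := fun w hw =>
    norm_ne_zero_iff.1 (hhpos w hw).ne'
  set ω : ℂ → ℂ := fun w => deriv g w / deriv h w with hωdef
  have hωd : DifferentiableOn ℂ ω (ball 0 1) := hg'.div hh' hne
  have hωlt : ∀ w ∈ ball (0:ℂ) 1, ‖ω w‖ < 1 := by
    intro w hw
    rw [hωdef]
    simp only [norm_div]
    exact (div_lt_one (hhpos w hw)).2 (hsp w hw)
  have h0mem : (0:ℂ) ∈ ball (0:ℂ) 1 := mem_ball_self one_pos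
  set c : ℂ := ω 0 with hcdef
  have hc : ‖c‖ < 1 := hωlt 0 h0mem
  set a : ℝ := ‖c‖ with hadef
  have ha0 : 0 ≤ a := norm_nonneg c
  -- the Möbius-composed map F
  set F : ℂ → ℂ := fun w => (ω w - c) / (1 - (starRingEnd ℂ) c * ω w) with hFdef
  have hden : ∀ w ∈ ball (0:ℂ) 1, 1 - (starRingEnd ℂ) c * ω w ≠ 0 := fun w hw =>
    mobius_denom_ne c (ω w) hc (hωlt w hw)
  have hFd : DifferentiableOn ℂ F (ball 0 1) :=
    DifferentiableOn.div (hωd.sub (differentiableOn_const c))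
      ((differentiableOn_const 1).sub ((differentiableOn_const _).mul hωd)) hden
  have hF0 : F 0 = 0 := by simp [hFdef, ← hcdef]
  have hFmaps : Set.MapsTo F (ball (0:ℂ) 1) (ball (0:ℂ) 1) := by
    intro w hw
    rw [mem_ball_zero_iff]
    have hd := hden w hw
    have hdpos : 0 < ‖1 - (starRingEnd ℂ) c * ω w‖ :=
      norm_pos_iff.2 hd
    rw [hFdef]
    simp only [norm_div]
    rw [div_lt_one hdpos]
    have hlt : normSq (ω w - c) < normSq (1 - (starRingEnd ℂ) c * ω w) := by
      have h1 := normSq_one_sub_conj_mul c (ω w)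
      have h2 := Complex.normSq_sub (ω w) c
      have h3 : normSq c < 1 := by
        rw [← Complex.sq_norm]; nlinarith
      have h4 : normSq (ω w) < 1 := by
        rw [← Complex.sq_norm]; nlinarith [hωlt w hw, norm_nonneg (ω w)]
      nlinarith [h1, h2]
    calc ‖ω w - c‖ = Real.sqrt (normSq (ω w - c)) := Complex.norm_def _
      _ < Real.sqrt (normSq (1 - (starRingEnd ℂ) c * ω w)) :=
          Real.sqrt_lt_sqrt (normSq_nonneg _) hlt
      _ = ‖1 - (starRingEnd ℂ) c * ω w‖ := (Complex.norm_def _).symm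
  -- Schwarz lemma
  have hSchwarz : ∀ w ∈ ball (0:ℂ) 1, ‖F w‖ ≤ ‖w‖ := by
    intro w hw
    have hwlt : ‖w‖ < 1 := by
      exact mem_ball_zero_iff.1 hw
    exact Complex.norm_le_norm_of_mapsTo_ball hFd (hFmaps.mono_right ball_subset_closedBall) hF0 hwlt
  -- main argument
  intro z hz
  refine ⟨hsp z hz, ?_⟩
  set u : ℂ := ω z with hudef
  set r : ℝ := ‖z‖ with hrdef
  set x : ℝ := ‖u‖ with hxdef
  have hr0 : 0 ≤ r := norm_nonneg z
  have hr1 : r < 1 := mem_ball_zero_iff.1 hz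
  have hx0 : 0 ≤ x := norm_nonneg u
  have hx1 : x < 1 := hωlt z hz
  -- Schwarz ⇒ quadratic inequality
  have hS := hSchwarz z hz
  have hdpos : 0 < ‖1 - (starRingEnd ℂ) c * u‖ := norm_pos_iff.2 (hden z hz)
  have hS' : ‖u - c‖ ≤ r * ‖1 - (starRingEnd ℂ) c * u‖ := by
    rw [hFdef] at hS
    simp only [norm_div] at hS
    rw [div_le_iff₀ hdpos] at hS
    linarith [hS]
  have hS2 : normSq (u - c) ≤ r^2 * normSq (1 - (starRingEnd ℂ) c * u) := by
    have := mul_self_le_mul_self (norm_nonneg (u - c)) hS'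
    rw [← Complex.sq_norm, ← Complex.sq_norm]
    nlinarith [this]
  have ht : (u * (starRingEnd ℂ) c).re ≤ a * x := by
    calc (u * (starRingEnd ℂ) c).re ≤ ‖u * (starRingEnd ℂ) c‖ := Complex.re_le_norm _
      _ = x * a := by rw [norm_mul, Complex.norm_conj]
      _ = a * x := mul_comm _ _
  have hQ : x^2 + a^2 - r^2 - r^2*a^2*x^2 ≤ 2*a*x*(1-r^2) := by
    have h1 := normSq_one_sub_conj_mul c u
    have h2 := Complex.normSq_sub u c
    have e1 : normSq u = x^2 := by rw [← Complex.sq_norm]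
    have e2 : normSq c = a^2 := by rw [← Complex.sq_norm]
    rw [h1, h2, e1, e2] at hS2
    nlinarith [hS2, ht, mul_le_mul_of_nonneg_left ht (show (0:ℝ) ≤ 1 - r^2 by nlinarith)]
  have hkey : (1-r^2)*(1-a) ≤ (1-x^2)*(1+a) :=
    real_key_sp a r x ha0 hc hr0 hr1 hx0 hQ
  -- assemble the bound
  have h1r2 : (0:ℝ) < 1 - r^2 := by nlinarith
  have h1x2 : (0:ℝ) < 1 - x^2 := by nlinarith
  have h1a : (0:ℝ) < 1 - a := by linarith
  have h1a' : (0:ℝ) < 1 + a := by linarith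
  have hAh : 0 < ‖deriv h z‖ := hhpos z hz
  have hAg : ‖deriv g z‖ = x * ‖deriv h z‖ := by
    show ‖deriv g z‖
      = ‖deriv g z / deriv h z‖ * ‖deriv h z‖
    rw [norm_div, div_mul_cancel₀ _ hAh.ne']
  have hMz := hM z hz
  have habs : |‖deriv h z‖ ^ 2 - ‖deriv g z‖ ^ 2|
      = ‖deriv h z‖ ^ 2 * (1 - x ^ 2) := by
    rw [_root_.abs_of_nonneg]
    · rw [hAg]; ring
    · rw [hAg]; nlinarith
  rw [habs, Real.sqrt_mul (sq_nonneg (‖deriv h z‖)) (1 - x ^ 2),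
    Real.sqrt_sq hAh.le, ← hrdef] at hMz
  set Ah : ℝ := ‖deriv h z‖ with hAhdef
  set P : ℝ := (1 - r^2) ^ ν with hPdef
  have hP : 0 < P := Real.rpow_pos_of_pos h1r2 ν
  set Q : ℝ := Real.sqrt (1 - r^2) with hQdef
  have hQpos : 0 < Q := Real.sqrt_pos.2 h1r2
  set K : ℝ := Real.sqrt ((1-a)/(1+a)) with hKdef
  set K' : ℝ := Real.sqrt ((1+a)/(1-a)) with hK'def
  have hKpos : 0 < K := Real.sqrt_pos.2 (by positivity)
  have hK'pos : 0 < K' := Real.sqrt_pos.2 (by positivity)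
  have hKK' : K * K' = 1 := by
    rw [hKdef, hK'def, ← Real.sqrt_mul (by positivity)]
    rw [show (1-a)/(1+a) * ((1+a)/(1-a)) = 1 by field_simp]
    exact Real.sqrt_one
  have hsqrt2 : Q * K ≤ Real.sqrt (1 - x^2) := by
    rw [hQdef, hKdef, ← Real.sqrt_mul h1r2.le]
    apply Real.sqrt_le_sqrt
    rw [show (1-r^2) * ((1-a)/(1+a)) = (1-r^2)*(1-a)/(1+a) by ring,
      div_le_iff₀ h1a']
    linarith [hkey]
  have hmain : Ah * K * (P * Q) ≤ M := by
    have hstep : P * (Ah * (Q * K)) ≤ P * (Ah * Real.sqrt (1 - x^2)) := by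
      apply mul_le_mul_of_nonneg_left _ hP.le
      exact mul_le_mul_of_nonneg_left hsqrt2 hAh.le
    calc Ah * K * (P * Q) = P * (Ah * (Q * K)) := by ring
      _ ≤ P * (Ah * Real.sqrt (1 - x^2)) := hstep
      _ ≤ M := hMz
  have hrw : (1 - r ^ 2) ^ (ν + 1/2 : ℝ) = P * Q := by
    rw [hPdef, hQdef, Real.rpow_add h1r2, Real.sqrt_eq_rpow]
  rw [hrw]
  have hstep2 : Ah * K ≤ M / (P * Q) := (le_div_iff₀ (by positivity)).2 hmain
  calc Ah = Ah * K * K' := by rw [mul_assoc, hKK', mul_one]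
    _ ≤ M / (P * Q) * K' := mul_le_mul_of_nonneg_right hstep2 hK'pos.le
end

section
/- Let ν > 0 and let f = h + conj(g) be a locally univalent harmonic mapping on 𝔻 (i.e. J_f(z) ≠ 0 for all z ∈ 𝔻). If β*_ν(f) < ∞, then β_{ν+1/2}(f) < ∞; that is, every locally univalent harmonic ν-Bloch-type mapping is a harmonic (ν+1/2)-Bloch mapping. -/
open Complex Metric

private lemma mobius_normSq (a w : ℂ) :
    Complex.normSq (1 - (starRingEnd ℂ) a * w) - Complex.normSq (a - w)
      = (1 - Complex.normSq a) * (1 - Complex.normSq w) := by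
  simp only [Complex.normSq_apply, Complex.mul_re, Complex.mul_im, Complex.sub_re,
    Complex.sub_im, Complex.one_re, Complex.one_im, Complex.conj_re, Complex.conj_im]
  ring

private lemma aux_bloch (ν M : ℝ) (H G : ℂ → ℂ)
    (hH : DifferentiableOn ℂ H (ball 0 1)) (hG : DifferentiableOn ℂ G (ball 0 1))
    (hlt : ∀ z ∈ ball (0:ℂ) 1, ‖G z‖ < ‖H z‖)
    (hM : ∀ z ∈ ball (0:ℂ) 1,
      (1 - ‖z‖ ^ 2) ^ ν *
        Real.sqrt (‖H z‖ ^ 2 - ‖G z‖ ^ 2) ≤ M) :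
    ∃ M' : ℝ, ∀ z ∈ ball (0:ℂ) 1,
      (1 - ‖z‖ ^ 2) ^ (ν + 1/2) *
        (‖H z‖ + ‖G z‖) ≤ M' := by
  have hHne : ∀ z ∈ ball (0:ℂ) 1, H z ≠ 0 := by
    intro z hz h0
    have := hlt z hz
    rw [h0, norm_zero] at this
    exact absurd this (norm_nonneg _).not_gt
  set ω : ℂ → ℂ := fun z => G z / H z with hω
  have hωd : DifferentiableOn ℂ ω (ball 0 1) := hG.div hH hHne
  have hωlt : ∀ z ∈ ball (0:ℂ) 1, ‖ω z‖ < 1 := by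
    intro z hz
    rw [hω]
    simp only [norm_div]
    exact (div_lt_one (lt_of_le_of_lt (norm_nonneg _) (hlt z hz))).2 (hlt z hz)
  have h01 : (0:ℂ) ∈ ball (0:ℂ) 1 := by simp
  set a : ℂ := ω 0 with ha
  have haa : ‖a‖ < 1 := hωlt 0 h01
  -- denominator nonzero
  have hden : ∀ w : ℂ, ‖w‖ < 1 → (1 - (starRingEnd ℂ) a * w) ≠ 0 := by
    intro w hw h0
    have : ‖(starRingEnd ℂ) a * w‖ = 1 := by
      have : (starRingEnd ℂ) a * w = 1 := by linear_combination -h0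
      simp [this]
    rw [norm_mul, Complex.norm_conj] at this
    nlinarith [norm_nonneg a, norm_nonneg w]
  set F : ℂ → ℂ := fun z => (a - ω z) / (1 - (starRingEnd ℂ) a * ω z) with hF
  have hFd : DifferentiableOn ℂ F (ball 0 1) := by
    apply DifferentiableOn.div
    · exact (differentiableOn_const a).sub hωd
    · exact (differentiableOn_const 1).sub ((differentiableOn_const _).mul hωd)
    · exact fun z hz => hden _ (hωlt z hz)
  have hF0 : F 0 = 0 := by simp [hF, ha]
  -- |F z| < 1 on the ball
  have hFlt : ∀ z ∈ ball (0:ℂ) 1, ‖F z‖ < 1 := by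
    intro z hz
    have hw := hωlt z hz
    have hd := hden _ hw
    have key := mobius_normSq a (ω z)
    have h1 : Complex.normSq (a - ω z) < Complex.normSq (1 - (starRingEnd ℂ) a * ω z) := by
      have : 0 < (1 - Complex.normSq a) * (1 - Complex.normSq (ω z)) := by
        apply mul_pos <;>
        · rw [sub_pos, ← Complex.sq_norm]
          nlinarith [norm_nonneg a, norm_nonneg (ω z)]
      linarith
    rw [hF]
    simp only [norm_div]
    rw [div_lt_one (by simpa [norm_pos_iff] using hd : 0 < ‖_‖)]
    have := Complex.sq_norm (a - ω z)
    have := Complex.sq_norm (1 - (starRingEnd ℂ) a * ω z)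
    nlinarith [norm_nonneg (a - ω z), norm_nonneg (1 - (starRingEnd ℂ) a * ω z)]
  have hFmaps : Set.MapsTo F (ball 0 1) (ball 0 1) := by
    intro z hz; simpa [mem_ball_zero_iff] using hFlt z hz
  -- Schwarz
  have hSch : ∀ z ∈ ball (0:ℂ) 1, ‖F z‖ ≤ ‖z‖ := by
    intro z hz
    exact Complex.norm_le_norm_of_mapsTo_ball hFd (hFmaps.mono_right ball_subset_closedBall) hF0 (mem_ball_zero_iff.1 hz)
  -- involution: ω z * (1 - conj a * F z) = a - F z
  have hinv : ∀ z ∈ ball (0:ℂ) 1, ω z * (1 - (starRingEnd ℂ) a * F z) = a - F z := by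
    intro z hz
    have hd := hden _ (hωlt z hz)
    have hd' : 1 - ω z * (starRingEnd ℂ) a ≠ 0 := by rw [mul_comm]; exact hd
    rw [hF]
    field_simp
    ring
  -- lower bound on 1 - |ω z|^2
  have hkey : ∀ z ∈ ball (0:ℂ) 1,
      (1 - ‖a‖ ^ 2) * (1 - ‖z‖ ^ 2) ≤ 4 * (1 - ‖ω z‖ ^ 2) := by
    intro z hz
    set u := F z with hu
    have hu1 : ‖u‖ < 1 := hFlt z hz
    have huz : ‖u‖ ≤ ‖z‖ := hSch z hz
    have key := mobius_normSq a u
    have hrel : Complex.normSq (a - u) = Complex.normSq (ω z) * Complex.normSq (1 - (starRingEnd ℂ) a * u) := by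
      rw [← Complex.normSq_mul, hinv z hz]
    have hD4 : Complex.normSq (1 - (starRingEnd ℂ) a * u) ≤ 4 := by
      have habs : ‖1 - (starRingEnd ℂ) a * u‖ ≤ 2 := by
        have h1 := norm_sub_le (1:ℂ) ((starRingEnd ℂ) a * u)
        rw [norm_one, norm_mul,
          Complex.norm_conj] at h1
        nlinarith [norm_nonneg a, norm_nonneg u]
      rw [← Complex.sq_norm]
      nlinarith [norm_nonneg (1 - (starRingEnd ℂ) a * u)]
    -- normSq(1-āu) * (1 - |ω z|²) = (1-|a|²)(1-|u|²)
    have heq : Complex.normSq (1 - (starRingEnd ℂ) a * u) * (1 - ‖ω z‖ ^ 2)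
        = (1 - ‖a‖ ^ 2) * (1 - ‖u‖ ^ 2) := by
      have e1 := Complex.sq_norm (ω z)
      have e2 := Complex.sq_norm a
      have e3 := Complex.sq_norm u
      rw [e1, e2, e3] at *
      linarith [key, hrel]  -- likely needs nlinarith / linear_combination
    have hω1 : ‖ω z‖ ^ 2 ≤ 1 := by nlinarith [hωlt z hz, norm_nonneg (ω z)]
    have h4 : Complex.normSq (1 - (starRingEnd ℂ) a * u) * (1 - ‖ω z‖ ^ 2)
        ≤ 4 * (1 - ‖ω z‖ ^ 2) := by nlinarith
    have hzu : (1 - ‖a‖ ^ 2) * (1 - ‖z‖ ^ 2)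
        ≤ (1 - ‖a‖ ^ 2) * (1 - ‖u‖ ^ 2) := by
      have h5 : ‖u‖ ^ 2 ≤ ‖z‖ ^ 2 := by nlinarith [norm_nonneg u]
      exact mul_le_mul_of_nonneg_left (by linarith) (by nlinarith [norm_nonneg a])
    rw [heq] at h4
    linarith
  -- conclusion
  refine ⟨2 * M / Real.sqrt ((1 - ‖a‖ ^ 2) / 4), fun z hz => ?_⟩
  have hz2 : ‖z‖ < 1 := mem_ball_zero_iff.1 hz
  have hpz : 0 < 1 - ‖z‖ ^ 2 := by nlinarith [norm_nonneg z]
  have hpa : 0 < (1 - ‖a‖ ^ 2) / 4 := by nlinarith [norm_nonneg a]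
  set c : ℝ := (1 - ‖a‖ ^ 2) / 4 with hc
  -- |H z|^2 * c * (1-|z|^2) ≤ |H z|^2 - |G z|^2
  have hJ : ‖H z‖ ^ 2 * (c * (1 - ‖z‖ ^ 2))
      ≤ ‖H z‖ ^ 2 - ‖G z‖ ^ 2 := by
    have hk := hkey z hz
    have hωz : ‖ω z‖ = ‖G z‖ / ‖H z‖ := by
      rw [hω]; simp [norm_div]
    have hH0 : 0 < ‖H z‖ :=
      lt_of_le_of_lt (norm_nonneg _) (hlt z hz)
    have hGH : ‖G z‖ ^ 2 = ‖ω z‖ ^ 2 * ‖H z‖ ^ 2 := by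
      rw [hωz]; field_simp
    rw [hGH, hc]
    nlinarith [sq_nonneg (‖H z‖)]
  have hH0 : 0 < ‖H z‖ :=
    lt_of_le_of_lt (norm_nonneg _) (hlt z hz)
  -- main estimate
  have e1 : (1 - ‖z‖ ^ 2) ^ (ν + 1/2)
      = (1 - ‖z‖ ^ 2) ^ ν * Real.sqrt (1 - ‖z‖ ^ 2) := by
    rw [Real.rpow_add hpz, Real.sqrt_eq_rpow]
  have e2 : Real.sqrt (1 - ‖z‖ ^ 2) * ‖H z‖
      ≤ Real.sqrt (‖H z‖ ^ 2 - ‖G z‖ ^ 2) / Real.sqrt c := by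
    rw [← Real.sqrt_sq hH0.le, ← Real.sqrt_mul hpz.le, le_div_iff₀ (Real.sqrt_pos.2 hpa),
      ← Real.sqrt_mul (by positivity)]
    apply Real.sqrt_le_sqrt
    nlinarith [hJ, Real.sq_sqrt (sq_nonneg (‖H z‖))]
  have e3 : ‖H z‖ + ‖G z‖ ≤ 2 * ‖H z‖ := by
    linarith [hlt z hz]
  have hMz := hM z hz
  have hν0 : (0:ℝ) < (1 - ‖z‖ ^ 2) ^ ν := Real.rpow_pos_of_pos hpz ν
  calc (1 - ‖z‖ ^ 2) ^ (ν + 1/2) * (‖H z‖ + ‖G z‖)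
      ≤ (1 - ‖z‖ ^ 2) ^ (ν + 1/2) * (2 * ‖H z‖) := by
        apply mul_le_mul_of_nonneg_left e3 (by positivity)
    _ = 2 * ((1 - ‖z‖ ^ 2) ^ ν * (Real.sqrt (1 - ‖z‖ ^ 2) * ‖H z‖)) := by
        rw [e1]; ring
    _ ≤ 2 * ((1 - ‖z‖ ^ 2) ^ ν * (Real.sqrt (‖H z‖ ^ 2 - ‖G z‖ ^ 2) / Real.sqrt c)) := by
        apply mul_le_mul_of_nonneg_left _ (by norm_num)
        exact mul_le_mul_of_nonneg_left e2 hν0.le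
    _ = 2 * ((1 - ‖z‖ ^ 2) ^ ν * Real.sqrt (‖H z‖ ^ 2 - ‖G z‖ ^ 2)) / Real.sqrt c := by
        ring
    _ ≤ 2 * M / Real.sqrt c := by
        exact (div_le_div_iff_of_pos_right (Real.sqrt_pos.2 hpa)).2 (by linarith)

private lemma sign_const (D : ℂ → ℝ) (hc : ContinuousOn D (ball 0 1))
    (hne : ∀ z ∈ ball (0:ℂ) 1, D z ≠ 0) (h0 : 0 < D 0) :
    ∀ z ∈ ball (0:ℂ) 1, 0 < D z := by
  intro z hz
  rcases (hne z hz).lt_or_gt with hneg | hpos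
  · exfalso
    have hsub := (convex_ball (0:ℂ) 1).isPreconnected.intermediate_value hz
      (mem_ball_self one_pos) hc
    obtain ⟨w, hw, hw0⟩ := hsub ⟨hneg.le, h0.le⟩
    exact hne w hw hw0
  · exact hpos

/-- Every locally univalent harmonic ν-Bloch-type mapping on `𝔻` is a harmonic
(ν + 1/2)-Bloch mapping: if `J_f ≠ 0` on `𝔻` and `β*_ν(f) < ∞`, then `β_{ν+1/2}(f) < ∞`. -/
theorem locally_univalent_Bloch_type_is_Bloch
    (ν : ℝ) (hν : 0 < ν) (h g : ℂ → ℂ)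
    (hh : DifferentiableOn ℂ h (ball 0 1))
    (hg : DifferentiableOn ℂ g (ball 0 1))
    (hg0 : g 0 = 0)
    (hlu : ∀ z ∈ ball (0 : ℂ) 1,
      ‖deriv h z‖ ^ 2 - ‖deriv g z‖ ^ 2 ≠ 0)
    (hf : ∃ M : ℝ, ∀ z ∈ ball (0 : ℂ) 1,
      (1 - ‖z‖ ^ 2) ^ ν *
        Real.sqrt |‖deriv h z‖ ^ 2 - ‖deriv g z‖ ^ 2| ≤ M) :
    ∃ M : ℝ, ∀ z ∈ ball (0 : ℂ) 1,
      (1 - ‖z‖ ^ 2) ^ (ν + 1 / 2) *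
        (‖deriv h z‖ + ‖deriv g z‖) ≤ M := by
  obtain ⟨M, hM⟩ := hf
  have hHd : DifferentiableOn ℂ (deriv h) (ball 0 1) :=
    ((hh.analyticOnNhd isOpen_ball).deriv).differentiableOn
  have hGd : DifferentiableOn ℂ (deriv g) (ball 0 1) :=
    ((hg.analyticOnNhd isOpen_ball).deriv).differentiableOn
  have hcont : ContinuousOn
      (fun z => ‖deriv h z‖ ^ 2 - ‖deriv g z‖ ^ 2) (ball 0 1) := by
    apply ContinuousOn.sub
    · exact (continuous_norm.comp_continuousOn hHd.continuousOn).pow 2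
    · exact (continuous_norm.comp_continuousOn hGd.continuousOn).pow 2
  have h01 : (0:ℂ) ∈ ball (0:ℂ) 1 := mem_ball_self one_pos
  rcases (hlu 0 h01).lt_or_gt with hneg | hpos
  · -- |h'|² < |g'|² everywhere
    have hsgn : ∀ z ∈ ball (0:ℂ) 1,
        0 < ‖deriv g z‖ ^ 2 - ‖deriv h z‖ ^ 2 := by
      apply sign_const
      · exact hcont.neg.congr (fun z _ => by simp only [Pi.neg_apply]; ring)
      · intro z hz h0; exact hlu z hz (by linarith)
      · linarith
    have hlt : ∀ z ∈ ball (0:ℂ) 1,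
        ‖deriv h z‖ < ‖deriv g z‖ := by
      intro z hz
      have := hsgn z hz
      nlinarith [norm_nonneg (deriv h z), norm_nonneg (deriv g z)]
    have hM' : ∀ z ∈ ball (0:ℂ) 1, (1 - ‖z‖ ^ 2) ^ ν *
        Real.sqrt (‖deriv g z‖ ^ 2 - ‖deriv h z‖ ^ 2) ≤ M := by
      intro z hz
      have := hM z hz
      rwa [abs_of_neg (by linarith [hsgn z hz]), neg_sub] at this
    obtain ⟨M', hM'⟩ := aux_bloch ν M (deriv g) (deriv h) hGd hHd hlt hM'
    exact ⟨M', fun z hz => by rw [add_comm (‖deriv h z‖)]; exact hM' z hz⟩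
  · have hsgn : ∀ z ∈ ball (0:ℂ) 1,
        0 < ‖deriv h z‖ ^ 2 - ‖deriv g z‖ ^ 2 :=
      sign_const _ hcont hlu hpos
    have hlt : ∀ z ∈ ball (0:ℂ) 1,
        ‖deriv g z‖ < ‖deriv h z‖ := by
      intro z hz
      have := hsgn z hz
      nlinarith [norm_nonneg (deriv h z), norm_nonneg (deriv g z)]
    have hM' : ∀ z ∈ ball (0:ℂ) 1, (1 - ‖z‖ ^ 2) ^ ν *
        Real.sqrt (‖deriv h z‖ ^ 2 - ‖deriv g z‖ ^ 2) ≤ M := by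
      intro z hz
      have := hM z hz
      rwa [abs_of_pos (hsgn z hz)] at this
    exact aux_bloch ν M (deriv h) (deriv g) hHd hGd hlt hM'
end

section
/- Let ν > 0 and let f = h + conj(g) be a locally univalent harmonic mapping on 𝔻 (J_f(z) ≠ 0 for all z ∈ 𝔻) whose pre-Schwarzian norm satisfies ||P_f|| = sup_{z∈𝔻}(1−|z|²)|P_f(z)| ≤ ν. Then β*_{ν/2}(f) < ∞; that is, f is a harmonic (ν/2)-Bloch-type mapping. -/
open Complex Metric

/-- If `f = h + conj g` is a locally univalent harmonic mapping on `𝔻` whose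
pre-Schwarzian norm satisfies `‖P_f‖ ≤ ν`, where
`P_f = (h'' conj h' − g'' conj g')/J_f`, then `β*_{ν/2}(f) < ∞`,
i.e. `f` is a harmonic (ν/2)-Bloch-type mapping. -/
theorem preSchwarzian_bound_gives_Bloch_type
    (ν : ℝ) (hν : 0 < ν) (h g : ℂ → ℂ)
    (hh : DifferentiableOn ℂ h (ball 0 1))
    (hg : DifferentiableOn ℂ g (ball 0 1))
    (hg0 : g 0 = 0)
    (hlu : ∀ z ∈ ball (0 : ℂ) 1,
      ‖deriv h z‖ ^ 2 - ‖deriv g z‖ ^ 2 ≠ 0)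
    (hP : ∀ z ∈ ball (0 : ℂ) 1,
      (1 - ‖z‖ ^ 2) *
        ‖(deriv (deriv h) z * (starRingEnd ℂ) (deriv h z)
            - deriv (deriv g) z * (starRingEnd ℂ) (deriv g z))
          / ((‖deriv h z‖ ^ 2 - ‖deriv g z‖ ^ 2 : ℝ) : ℂ)‖ ≤ ν) :
    ∃ M : ℝ, ∀ z ∈ ball (0 : ℂ) 1,
      (1 - ‖z‖ ^ 2) ^ (ν / 2) *
        Real.sqrt |‖deriv h z‖ ^ 2 - ‖deriv g z‖ ^ 2| ≤ M := by
  set J : ℂ → ℝ := fun w => ‖deriv h w‖ ^ 2 - ‖deriv g w‖ ^ 2 with hJdef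
  -- Step 1: at each point of the ball, log ∘ J has a derivative with an explicit bound
  have key : ∀ z ∈ ball (0:ℂ) 1, ∃ L : ℂ →L[ℝ] ℝ,
      HasFDerivAt (fun w => Real.log (J w)) L z ∧
      ∀ v : ℂ, |L v| ≤ 2 * ν / (1 - ‖z‖ ^ 2) * ‖v‖ := by
    intro z hz
    have hz1 : ‖z‖ < 1 := by
      simpa using mem_ball_zero_iff.mp hz
    have hz2 : (0:ℝ) < 1 - ‖z‖ ^ 2 := by
      have h0 : (0:ℝ) ≤ ‖z‖ := norm_nonneg z
      nlinarith
    have hha : AnalyticOnNhd ℂ h (ball 0 1) := hh.analyticOnNhd isOpen_ball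
    have hga : AnalyticOnNhd ℂ g (ball 0 1) := hg.analyticOnNhd isOpen_ball
    have hd1 : HasDerivAt (deriv h) (deriv (deriv h) z) z :=
      ((hha.deriv z hz).differentiableAt).hasDerivAt
    have hd2 : HasDerivAt (deriv g) (deriv (deriv g) z) z :=
      ((hga.deriv z hz).differentiableAt).hasDerivAt
    have hf1 : HasFDerivAt (deriv h) ((ContinuousLinearMap.smulRight (1 : ℂ →L[ℂ] ℂ) (deriv (deriv h) z)).restrictScalars ℝ) z :=
      hd1.hasFDerivAt.restrictScalars ℝ
    have hf2 : HasFDerivAt (deriv g) ((ContinuousLinearMap.smulRight (1 : ℂ →L[ℂ] ℂ) (deriv (deriv g) z)).restrictScalars ℝ) z :=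
      hd2.hasFDerivAt.restrictScalars ℝ
    have hcj : ∀ w : ℂ, HasFDerivAt (fun y : ℂ => (starRingEnd ℂ) y)
        ((Complex.conjCLE : ℂ ≃L[ℝ] ℂ) : ℂ →L[ℝ] ℂ) w := fun w =>
      (Complex.conjCLE : ℂ ≃L[ℝ] ℂ).hasFDerivAt
    have hcf1 : HasFDerivAt (fun w => (starRingEnd ℂ) (deriv h w))
        (((Complex.conjCLE : ℂ ≃L[ℝ] ℂ) : ℂ →L[ℝ] ℂ).comp
          ((ContinuousLinearMap.smulRight (1 : ℂ →L[ℂ] ℂ) (deriv (deriv h) z)).restrictScalars ℝ)) z :=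
      (hcj (deriv h z)).comp z hf1
    have hcf2 : HasFDerivAt (fun w => (starRingEnd ℂ) (deriv g w))
        (((Complex.conjCLE : ℂ ≃L[ℝ] ℂ) : ℂ →L[ℝ] ℂ).comp
          ((ContinuousLinearMap.smulRight (1 : ℂ →L[ℂ] ℂ) (deriv (deriv g) z)).restrictScalars ℝ)) z :=
      (hcj (deriv g z)).comp z hf2
    have hm1 := hf1.mul hcf1
    have hm2 := hf2.mul hcf2
    have hFd := hm1.sub hm2
    set LF := (deriv h z • (((Complex.conjCLE : ℂ ≃L[ℝ] ℂ) : ℂ →L[ℝ] ℂ).comp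
          ((ContinuousLinearMap.smulRight (1 : ℂ →L[ℂ] ℂ) (deriv (deriv h) z)).restrictScalars ℝ)) +
        (starRingEnd ℂ) (deriv h z) • ((ContinuousLinearMap.smulRight (1 : ℂ →L[ℂ] ℂ) (deriv (deriv h) z)).restrictScalars ℝ)) -
        (deriv g z • (((Complex.conjCLE : ℂ ≃L[ℝ] ℂ) : ℂ →L[ℝ] ℂ).comp
          ((ContinuousLinearMap.smulRight (1 : ℂ →L[ℂ] ℂ) (deriv (deriv g) z)).restrictScalars ℝ)) +
        (starRingEnd ℂ) (deriv g z) • ((ContinuousLinearMap.smulRight (1 : ℂ →L[ℂ] ℂ) (deriv (deriv g) z)).restrictScalars ℝ)) with hLF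
    have hJre : J = fun w => (deriv h w * (starRingEnd ℂ) (deriv h w)
        - deriv g w * (starRingEnd ℂ) (deriv g w)).re := by
      funext w
      simp [hJdef, Complex.mul_conj, Complex.sq_norm]
    have hJd : HasFDerivAt J (Complex.reCLM.comp LF) z := by
      rw [hJre]
      exact (Complex.reCLM.hasFDerivAt).comp z hFd
    have hud : HasFDerivAt (fun w => Real.log (J w)) ((J z)⁻¹ • (Complex.reCLM.comp LF)) z :=
      by have := (Real.hasDerivAt_log (hlu z hz)).comp_hasFDerivAt z hJd; exact this
    refine ⟨(J z)⁻¹ • (Complex.reCLM.comp LF), hud, ?_⟩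
    intro v
    set A := deriv (deriv h) z * (starRingEnd ℂ) (deriv h z)
        - deriv (deriv g) z * (starRingEnd ℂ) (deriv g z) with hA
    have hre : (Complex.reCLM.comp LF) v = 2 * (A * v).re := by
      simp only [hLF, hA, ContinuousLinearMap.comp_apply, ContinuousLinearMap.sub_apply,
        ContinuousLinearMap.add_apply, ContinuousLinearMap.smul_apply,
        ContinuousLinearMap.coe_restrictScalars', ContinuousLinearMap.smulRight_apply,
        ContinuousLinearMap.one_apply, ContinuousLinearEquiv.coe_coe, Complex.conjCLE_apply,
        Complex.reCLM_apply, smul_eq_mul, Complex.sub_re, Complex.add_re, Complex.mul_re,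
        Complex.mul_im, Complex.conj_re, Complex.conj_im, map_mul, Complex.sub_im, Complex.add_im]
      ring
    rw [ContinuousLinearMap.smul_apply, hre, smul_eq_mul]
    have h1 : |(J z)⁻¹ * (2 * (A * v).re)| ≤ |J z|⁻¹ * (2 * ‖A * v‖) := by
      rw [abs_mul, abs_inv]
      gcongr
      rw [abs_mul, _root_.abs_two]
      gcongr
      exact Complex.abs_re_le_norm _
    have hP' : ‖A‖ / |J z| ≤ ν / (1 - ‖z‖ ^ 2) := by
      have := hP z hz
      rw [norm_div, Complex.norm_real, Real.norm_eq_abs] at this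
      rw [div_le_div_iff₀ (abs_pos.mpr (hlu z hz)) hz2]
      · calc ‖A‖ * (1 - ‖z‖ ^ 2)
            = (1 - ‖z‖ ^ 2) * (‖A‖ / |J z|) * |J z| := by
              field_simp [abs_ne_zero.mpr (hlu z hz)]
              rw [mul_div_assoc, div_self (abs_ne_zero.mpr (hlu z hz)), mul_one]
          _ ≤ ν * |J z| := by
              apply mul_le_mul_of_nonneg_right _ (abs_nonneg _)
              simpa [div_eq_mul_inv, mul_assoc] using this
    · calc |(J z)⁻¹ * (2 * (A * v).re)| ≤ |J z|⁻¹ * (2 * ‖A * v‖) := h1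
        _ = 2 * (‖A‖ / |J z|) * ‖v‖ := by
            rw [norm_mul]; field_simp
        _ ≤ 2 * (ν / (1 - ‖z‖ ^ 2)) * ‖v‖ := by
            gcongr
        _ = 2 * ν / (1 - ‖z‖ ^ 2) * ‖v‖ := by ring
  -- Step 2: growth estimate for log J along radii
  have grow : ∀ z ∈ ball (0:ℂ) 1, Real.log (J z) ≤ Real.log (J 0)
      + ν * (Real.log (1 + ‖z‖) - Real.log (1 - ‖z‖)) := by
    intro z hz
    set r := ‖z‖ with hr
    have hr0 : (0:ℝ) ≤ r := norm_nonneg z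
    have hr1 : r < 1 := by
      simpa using mem_ball_zero_iff.mp hz
    have hmem : ∀ t ∈ Set.Icc (0:ℝ) 1, t • z ∈ ball (0:ℂ) 1 := by
      intro t ht
      rw [mem_ball_zero_iff]
      rw [norm_smul, ← hr]
      have : ‖t‖ = t := Real.norm_of_nonneg ht.1
      rw [this]
      nlinarith [ht.2]
    set B : ℝ → ℝ := fun t => ν * (Real.log (1 + t*r) - Real.log (1 - t*r)) with hB
    set w : ℝ → ℝ := fun t => B t - Real.log (J (t • z)) with hw
    have hderiv : ∀ t ∈ Set.Icc (0:ℝ) 1, ∃ d : ℝ, HasDerivAt w d t ∧ 0 ≤ d := by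
      intro t ht
      have htr0 : 0 < 1 + t * r := by nlinarith [ht.1, ht.2]
      have htr1 : 0 < 1 - t * r := by nlinarith [ht.1, ht.2]
      obtain ⟨L, hL, hLb⟩ := key (t • z) (hmem t ht)
      have hσ : HasDerivAt (fun s : ℝ => s • z) z t := by
        simpa using (hasDerivAt_id t).smul_const z
      have hφ : HasDerivAt (fun s : ℝ => Real.log (J (s • z))) (L z) t :=
        by have := hL.comp_hasDerivAt t hσ; exact this
      have hB1 : HasDerivAt (fun s : ℝ => Real.log (1 + s * r)) ((1 + t*r)⁻¹ * r) t := by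
        have hlin : HasDerivAt (fun s : ℝ => 1 + s * r) r t := by
          simpa using ((hasDerivAt_id t).mul_const r).const_add 1
        exact (Real.hasDerivAt_log (ne_of_gt htr0)).comp t hlin
      have hB2 : HasDerivAt (fun s : ℝ => Real.log (1 - s * r)) ((1 - t*r)⁻¹ * (-r)) t := by
        have hlin : HasDerivAt (fun s : ℝ => 1 - s * r) (-r) t := by
          simpa using ((hasDerivAt_id t).mul_const r).const_sub 1
        exact (Real.hasDerivAt_log (ne_of_gt htr1)).comp t hlin
      have hBd : HasDerivAt B (ν * ((1 + t*r)⁻¹ * r - (1 - t*r)⁻¹ * (-r))) t :=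
        ((hB1.sub hB2).const_mul ν)
      refine ⟨ν * ((1 + t*r)⁻¹ * r - (1 - t*r)⁻¹ * (-r)) - L z, hBd.sub hφ, ?_⟩
      have habs : ‖t • z‖ = t * r := by
        rw [norm_smul, Real.norm_of_nonneg ht.1, ← hr]
      have hb := hLb z
      rw [habs] at hb
      have hLz : L z ≤ 2 * ν / (1 - (t*r)^2) * r := by
        calc L z ≤ |L z| := le_abs_self _
          _ ≤ 2 * ν / (1 - (t*r)^2) * r := by simpa [← hr] using hb
      have heq : ν * ((1 + t*r)⁻¹ * r - (1 - t*r)⁻¹ * (-r)) = 2 * ν / (1 - (t*r)^2) * r := by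
        have : 1 - (t*r)^2 = (1 + t*r) * (1 - t*r) := by ring
        rw [this, div_mul_eq_mul_div, eq_div_iff (by positivity)]
        have e1 := mul_inv_cancel₀ htr0.ne'
        have e2 := mul_inv_cancel₀ htr1.ne'
        linear_combination ν * r * (1 - t*r) * e1 + ν * r * (1 + t*r) * e2
      linarith [hLz, heq.ge, heq.le]
    have hmono : MonotoneOn w (Set.Icc (0:ℝ) 1) := by
      apply monotoneOn_of_deriv_nonneg (convex_Icc 0 1)
      · intro t ht
        obtain ⟨d, hd, _⟩ := hderiv t ht
        exact hd.continuousAt.continuousWithinAt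
      · intro t ht
        rw [interior_Icc] at ht
        obtain ⟨d, hd, _⟩ := hderiv t (Set.mem_Icc_of_Ioo ht)
        exact hd.differentiableAt.differentiableWithinAt
      · intro t ht
        rw [interior_Icc] at ht
        obtain ⟨d, hd, hd0⟩ := hderiv t (Set.mem_Icc_of_Ioo ht)
        rw [hd.deriv]
        exact hd0
    have h01 := hmono (Set.left_mem_Icc.mpr zero_le_one) (Set.right_mem_Icc.mpr zero_le_one) zero_le_one
    simp only [hw, hB, zero_smul, one_smul, zero_mul, one_mul, Real.log_one, sub_zero,
      mul_zero, sub_self, zero_sub, neg_le_sub_iff_le_add, add_zero] at h01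
    linarith [h01]
  -- Step 3: conclude
  refine ⟨Real.exp (Real.log (J 0) / 2) * 2 ^ ν, ?_⟩
  intro z hz
  set r := ‖z‖ with hr
  have hr0 : (0:ℝ) ≤ r := norm_nonneg z
  have hr1 : r < 1 := by
    simpa using mem_ball_zero_iff.mp hz
  have h1r : (0:ℝ) < 1 - r := by linarith
  have h1r' : (0:ℝ) < 1 + r := by linarith
  have hJpos : 0 < |J z| := abs_pos.mpr (hlu z hz)
  have hsq : Real.sqrt |J z| = Real.exp (Real.log (J z) * (1/2)) := by
    rw [Real.sqrt_eq_rpow, Real.rpow_def_of_pos hJpos, Real.log_abs]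
  have hle : Real.exp (Real.log (J z) * (1/2))
      ≤ Real.exp (Real.log (J 0) / 2) * (1+r) ^ (ν/2) * ((1-r) ^ (ν/2))⁻¹ := by
    rw [Real.rpow_def_of_pos h1r', Real.rpow_def_of_pos h1r, ← Real.exp_neg, ← Real.exp_add,
      ← Real.exp_add]
    apply Real.exp_le_exp.mpr
    have := grow z hz
    rw [← hr] at this
    nlinarith [this]
  have hfac : (1 - r^2) ^ (ν/2) = (1+r) ^ (ν/2) * (1-r) ^ (ν/2) := by
    rw [← Real.mul_rpow h1r'.le h1r.le]
    congr 1
    ring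
  calc (1 - r^2) ^ (ν/2) * Real.sqrt |J z|
      ≤ (1+r) ^ (ν/2) * (1-r) ^ (ν/2) *
          (Real.exp (Real.log (J 0) / 2) * (1+r) ^ (ν/2) * ((1-r) ^ (ν/2))⁻¹) := by
        rw [hfac, hsq]
        exact mul_le_mul_of_nonneg_left hle (by positivity)
    _ = Real.exp (Real.log (J 0) / 2) * ((1+r) ^ (ν/2) * (1+r) ^ (ν/2)) *
          ((1-r) ^ (ν/2) * ((1-r) ^ (ν/2))⁻¹) := by ring
    _ = Real.exp (Real.log (J 0) / 2) * (1+r) ^ ν := by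
        rw [← Real.rpow_add h1r', mul_inv_cancel₀ (ne_of_gt (Real.rpow_pos_of_pos h1r _))]
        ring_nf
    _ ≤ Real.exp (Real.log (J 0) / 2) * 2 ^ ν := by
        apply mul_le_mul_of_nonneg_left _ (Real.exp_pos _).le
        exact Real.rpow_le_rpow (by linarith) (by linarith) hν.le
end

section
/- Let ν > 0 and let f be a holomorphic function on 𝔻 with f'(z) ≠ 0 for all z ∈ 𝔻 and sup_{z∈𝔻}(1−|z|²)|f''(z)/f'(z)| ≤ ν. Then sup_{z∈𝔻}(1−|z|²)^{ν/2}|f'(z)| < ∞, i.e. f belongs to the analytic (ν/2)-Bloch space. -/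
open Complex Metric

/-- If `f` is holomorphic on `𝔻` with `f'` nonvanishing and pre-Schwarzian norm
`sup (1−|z|²)|f''/f'| ≤ ν`, then `f` belongs to the analytic (ν/2)-Bloch space. -/
theorem analytic_preSchwarzian_bound_gives_Bloch
    (ν : ℝ) (hν : 0 < ν) (f : ℂ → ℂ)
    (hf : DifferentiableOn ℂ f (ball 0 1))
    (hf' : ∀ z ∈ ball (0 : ℂ) 1, deriv f z ≠ 0)
    (hP : ∀ z ∈ ball (0 : ℂ) 1,
      (1 - ‖z‖ ^ 2) * ‖deriv (deriv f) z / deriv f z‖ ≤ ν) :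
    ∃ M : ℝ, ∀ z ∈ ball (0 : ℂ) 1,
      (1 - ‖z‖ ^ 2) ^ (ν / 2) * ‖deriv f z‖ ≤ M := by
  have hg : AnalyticOnNhd ℂ (deriv f) (ball 0 1) :=
    (hf.analyticOnNhd isOpen_ball).deriv
  refine ⟨‖deriv f 0‖ * 2 ^ ν, ?_⟩
  intro z hz
  set r : ℝ := ‖z‖ with hrdef
  have hr0 : (0:ℝ) ≤ r := norm_nonneg z
  have hr1 : r < 1 := by
    have := mem_ball_zero_iff.mp hz
    simpa [← hrdef] using this
  have hmem : ∀ t ∈ Set.Icc (0:ℝ) 1, (t:ℂ) * z ∈ ball (0:ℂ) 1 := by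
    intro t ht
    rw [mem_ball_zero_iff, norm_mul, Complex.norm_real, Real.norm_of_nonneg ht.1,
      ← hrdef]
    nlinarith [ht.1, ht.2]
  set h : ℝ → ℂ := fun s => deriv f ((s:ℂ) * z) with hhdef
  set h' : ℝ → ℂ := fun s => z * deriv (deriv f) ((s:ℂ) * z) with hh'def
  have hne : ∀ t ∈ Set.Icc (0:ℝ) 1, h t ≠ 0 := fun t ht => hf' _ (hmem t ht)
  have hder : ∀ t ∈ Set.Icc (0:ℝ) 1, HasDerivAt h (h' t) t := by
    intro t ht
    have h1 : HasDerivAt (fun w : ℂ => w * z) z (t:ℂ) := hasDerivAt_mul_const z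
    have h2 : HasDerivAt (deriv f) (deriv (deriv f) ((t:ℂ)*z)) ((t:ℂ)*z) :=
      ((hg _ (hmem t ht)).differentiableAt).hasDerivAt
    have h3 := (h2.comp (t:ℂ) h1).comp_ofReal
    simpa [hhdef, hh'def, Function.comp, mul_comm] using h3
  set φ : ℝ → ℝ := fun s => Real.log (Complex.normSq (h s)) / 2 with hφdef
  set ψ : ℝ → ℝ := fun s => ν/2 * (Real.log (1 + s*r) - Real.log (1 - s*r)) with hψdef
  set D : ℝ → ℝ := fun s => ψ s - φ s with hDdef
  -- positivity facts on [0,1]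
  have hbnd : ∀ t ∈ Set.Icc (0:ℝ) 1, 0 < 1 - t*r ∧ 0 < 1 + t*r := by
    intro t ht
    constructor <;> nlinarith [ht.1, ht.2]
  -- derivative of D is nonneg on [0,1]
  have hDer : ∀ t ∈ Set.Icc (0:ℝ) 1, ∃ d, HasDerivAt D d t ∧ 0 ≤ d := by
    intro t ht
    have hd := hder t ht
    have hu : HasDerivAt (fun s => (h s).re) ((h' t).re) t := by
      simpa [Function.comp_def] using Complex.reCLM.hasFDerivAt.comp_hasDerivAt t hd
    have hv : HasDerivAt (fun s => (h s).im) ((h' t).im) t := by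
      simpa [Function.comp_def] using Complex.imCLM.hasFDerivAt.comp_hasDerivAt t hd
    have hN : HasDerivAt (fun s => Complex.normSq (h s))
        ((h' t).re * (h t).re + (h t).re * (h' t).re
          + ((h' t).im * (h t).im + (h t).im * (h' t).im)) t := by
      have := (hu.mul hu).add (hv.mul hv)
      simpa [Complex.normSq_apply, Pi.mul_def, Pi.add_def] using this
    have hNpos : 0 < Complex.normSq (h t) := Complex.normSq_pos.2 (hne t ht)
    have hφd : HasDerivAt φ
        (((h' t).re * (h t).re + (h t).re * (h' t).re
          + ((h' t).im * (h t).im + (h t).im * (h' t).im)) / Complex.normSq (h t) / 2) t :=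
      (hN.log hNpos.ne').div_const 2
    obtain ⟨hb1, hb2⟩ := hbnd t ht
    have ha : HasDerivAt (fun s : ℝ => 1 + s * r) r t := (hasDerivAt_mul_const r).const_add 1
    have hb : HasDerivAt (fun s : ℝ => 1 - s * r) (-r) t := (hasDerivAt_mul_const r).const_sub 1
    have hψd : HasDerivAt ψ (ν/2 * (r/(1+t*r) - (-r)/(1-t*r))) t :=
      ((ha.log hb2.ne').sub (hb.log hb1.ne')).const_mul (ν/2)
    refine ⟨_, (hψd.sub hφd), sub_nonneg.2 ?_⟩
    -- the key inequality
    have hPz := hP _ (hmem t ht)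
    have habs : ‖(t:ℂ)*z‖ = t * r := by
      rw [norm_mul, Complex.norm_real, Real.norm_of_nonneg ht.1, hrdef]
    set A : ℝ := ‖deriv (deriv f) ((t:ℂ)*z)‖ with hA
    set B : ℝ := ‖deriv f ((t:ℂ)*z)‖ with hB
    have hBpos : 0 < B := norm_pos_iff.mpr (hne t ht)
    have hA0 : 0 ≤ A := norm_nonneg _
    have hc : 0 < 1 - (t*r)^2 := by nlinarith
    have hPz' : (1 - (t*r)^2) * (A / B) ≤ ν := by
      rw [norm_div, habs] at hPz
      simpa [habs, ← hA, ← hB] using hPz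
    have hAB : A / B ≤ ν / (1 - (t*r)^2) := by
      rw [le_div_iff₀ hc]
      linarith [hPz']
    -- numerator Cauchy-Schwarz
    have hcs : (h' t).re * (h t).re + (h t).re * (h' t).re
          + ((h' t).im * (h t).im + (h t).im * (h' t).im)
        ≤ 2 * (‖h t‖ * ‖h' t‖) := by
      have h1 := Complex.re_le_norm ((starRingEnd ℂ) (h t) * h' t)
      rw [norm_mul, Complex.norm_conj] at h1
      simp only [Complex.mul_re, Complex.conj_re, Complex.conj_im] at h1
      nlinarith [h1]
    have habsh : ‖h t‖ = B := by rw [hB, hhdef]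
    have habsh' : ‖h' t‖ = r * A := by
      rw [hh'def, hA]; simp [map_mul, hrdef]
    have hφle : ((h' t).re * (h t).re + (h t).re * (h' t).re
          + ((h' t).im * (h t).im + (h t).im * (h' t).im)) / Complex.normSq (h t) / 2
        ≤ r * A / B := by
      have hsq : Complex.normSq (h t) = B^2 := by
        rw [← Complex.sq_norm, habsh]
      rw [habsh, habsh'] at hcs
      rw [hsq, div_div, div_le_div_iff₀ (by positivity) hBpos]
      nlinarith [mul_le_mul_of_nonneg_right hcs hBpos.le]
    have hψval : ν/2 * (r/(1+t*r) - (-r)/(1-t*r)) = ν * r / (1 - (t*r)^2) := by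
      rw [sub_eq_add_neg, neg_div, neg_neg, div_add_div _ _ hb2.ne' hb1.ne']
      rw [show (1 - (t*r)^2) = (1+t*r)*(1-t*r) by ring, mul_div_assoc']
      congr 1; ring
    refine hφle.trans ?_
    rw [hψval]
    have : r * A / B = r * (A / B) := by ring
    rw [this]
    calc r * (A / B) ≤ r * (ν / (1 - (t*r)^2)) :=
          mul_le_mul_of_nonneg_left hAB hr0
      _ = ν * r / (1 - (t*r)^2) := by ring
  -- monotonicity of D on [0,1]
  have hmono : MonotoneOn D (Set.Icc 0 1) := by
    apply monotoneOn_of_deriv_nonneg (convex_Icc 0 1)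
    · intro t ht
      obtain ⟨d, hd, -⟩ := hDer t ht
      exact hd.continuousAt.continuousWithinAt
    · intro t ht
      rw [interior_Icc] at ht
      obtain ⟨d, hd, -⟩ := hDer t (Set.Ioo_subset_Icc_self ht)
      exact hd.differentiableAt.differentiableWithinAt
    · intro t ht
      rw [interior_Icc] at ht
      obtain ⟨d, hd, hd0⟩ := hDer t (Set.Ioo_subset_Icc_self ht)
      rw [hd.deriv]
      exact hd0
  have hD01 : D 0 ≤ D 1 :=
    hmono (Set.left_mem_Icc.2 zero_le_one) (Set.right_mem_Icc.2 zero_le_one) zero_le_one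
  -- unfold D 0, D 1
  have hψ0 : ψ 0 = 0 := by simp [hψdef]
  have hh0 : h 0 = deriv f 0 := by simp [hhdef]
  have hh1 : h 1 = deriv f z := by simp [hhdef]
  have hφlog : ∀ t ∈ Set.Icc (0:ℝ) 1, φ t = Real.log (‖h t‖) := by
    intro t ht
    have : Complex.normSq (h t) = (‖h t‖)^2 := (Complex.sq_norm _).symm
    rw [hφdef]
    simp only [this, Real.log_pow]
    push_cast
    ring
  have h0mem : (0:ℝ) ∈ Set.Icc (0:ℝ) 1 := Set.left_mem_Icc.2 zero_le_one
  have h1mem : (1:ℝ) ∈ Set.Icc (0:ℝ) 1 := Set.right_mem_Icc.2 zero_le_one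
  have key : Real.log (‖deriv f z‖)
      ≤ Real.log (‖deriv f 0‖) + ψ 1 := by
    have e1 := hφlog 0 h0mem
    have e2 := hφlog 1 h1mem
    rw [hDdef] at hD01
    simp only at hD01
    rw [hψ0, e1, e2, hh0, hh1] at hD01
    linarith
  have hfz : 0 < ‖deriv f z‖ := norm_pos_iff.mpr (hf' z hz)
  have hf0 : 0 < ‖deriv f 0‖ :=
    norm_pos_iff.mpr (hf' 0 (by simp [mem_ball_zero_iff]))
  have hexp : ‖deriv f z‖
      ≤ ‖deriv f 0‖ * ((1+r)^(ν/2) * (1-r)^(-(ν/2))) := by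
    have h1p : (0:ℝ) < 1 + r := by linarith
    have h2p : (0:ℝ) < 1 - r := by linarith
    have hψ1 : ψ 1 = Real.log (1+r) * (ν/2) + Real.log (1-r) * (-(ν/2)) := by
      rw [hψdef]; simp; ring
    calc ‖deriv f z‖ = Real.exp (Real.log (‖deriv f z‖)) :=
          (Real.exp_log hfz).symm
      _ ≤ Real.exp (Real.log (‖deriv f 0‖) + ψ 1) := Real.exp_le_exp.2 key
      _ = Real.exp (Real.log (‖deriv f 0‖)) *
            (Real.exp (Real.log (1+r) * (ν/2)) * Real.exp (Real.log (1-r) * (-(ν/2)))) := by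
          rw [hψ1, Real.exp_add, Real.exp_add]
      _ = ‖deriv f 0‖ * ((1+r)^(ν/2) * (1-r)^(-(ν/2))) := by
          rw [Real.exp_log hf0, ← Real.rpow_def_of_pos h1p, ← Real.rpow_def_of_pos h2p]
  -- final arithmetic
  have h1p : (0:ℝ) < 1 + r := by linarith
  have h2p : (0:ℝ) < 1 - r := by linarith
  have hr2 : (0:ℝ) ≤ 1 - r^2 := by nlinarith
  have e1 : ((1:ℝ)-r^2)^(ν/2) = (1+r)^(ν/2) * (1-r)^(ν/2) := by
    rw [show (1-r^2:ℝ) = (1+r)*(1-r) by ring, Real.mul_rpow h1p.le h2p.le]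
  have e2 : ((1:ℝ)-r)^(ν/2) * (1-r)^(-(ν/2)) = 1 := by
    rw [← Real.rpow_add h2p]; simp
  have e3 : ((1:ℝ)+r)^(ν/2) * (1+r)^(ν/2) = (1+r)^ν := by
    rw [← Real.rpow_add h1p]; congr 1; ring
  have e4 : ((1:ℝ)+r)^ν ≤ 2^ν := Real.rpow_le_rpow (by linarith) (by linarith) hν.le
  calc (1 - r^2)^(ν/2) * ‖deriv f z‖
      ≤ (1 - r^2)^(ν/2) * (‖deriv f 0‖ * ((1+r)^(ν/2) * (1-r)^(-(ν/2)))) :=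
        mul_le_mul_of_nonneg_left hexp (Real.rpow_nonneg hr2 _)
    _ = ‖deriv f 0‖ * ((1+r)^(ν/2) * (1+r)^(ν/2))
          * ((1-r)^(ν/2) * (1-r)^(-(ν/2))) := by rw [e1]; ring
    _ = ‖deriv f 0‖ * (1+r)^ν := by rw [e2, e3, mul_one]
    _ ≤ ‖deriv f 0‖ * 2^ν :=
        mul_le_mul_of_nonneg_left e4 (norm_nonneg _)
end

section
/- Let ν > 0 and let f = h + conj(g) be a sense-preserving harmonic mapping on 𝔻 with β*_ν(f) < ∞ and dilatation ω_f = g'/h'. Then for every z ∈ 𝔻 with |z| = r, max{|h(z) − h(0)|, |g(z)|} ≤ β*_ν(f) · √((1+|ω_f(0)|)/(1−|ω_f(0)|)) · h_ν(r), where h_ν(r) = −log(1−r) if ν = 1/2 and h_ν(r) = ((1−r)^{1/2−ν} − 1)/(ν − 1/2) if ν ≠ 1/2. -/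
open Complex Metric Set

private lemma normSq_mobius (u v : ℂ) :
    Complex.normSq (1 - (starRingEnd ℂ) v * u) - Complex.normSq (u - v)
      = (1 - Complex.normSq v) * (1 - Complex.normSq u) := by
  simp only [Complex.normSq_apply, Complex.sub_re, Complex.sub_im, Complex.mul_re,
    Complex.mul_im, Complex.one_re, Complex.one_im, Complex.conj_re, Complex.conj_im]
  ring

private lemma mobius_lt_one {u v : ℂ} (hu : ‖u‖ < 1) (hv : ‖v‖ < 1) :
    ‖(u - v) / (1 - (starRingEnd ℂ) v * u)‖ < 1 := by
  have hu2 : Complex.normSq u < 1 := by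
    rw [← Complex.sq_norm]; nlinarith [norm_nonneg u]
  have hv2 : Complex.normSq v < 1 := by
    rw [← Complex.sq_norm]; nlinarith [norm_nonneg v]
  have key : Complex.normSq (u - v) < Complex.normSq (1 - (starRingEnd ℂ) v * u) := by
    nlinarith [normSq_mobius u v]
  have hden : (1 : ℂ) - (starRingEnd ℂ) v * u ≠ 0 := by
    intro hc
    rw [hc, map_zero] at key
    exact absurd key (not_lt.mpr (Complex.normSq_nonneg _))
  rw [norm_div, div_lt_one (by
    rw [Complex.norm_def]
    exact Real.sqrt_pos.mpr (lt_of_le_of_lt (Complex.normSq_nonneg _) key))]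
  rw [Complex.norm_def, Complex.norm_def]
  exact Real.sqrt_lt_sqrt (Complex.normSq_nonneg _) key


set_option maxHeartbeats 1000000 in
private lemma schwarz_pick_sq {ω : ℂ → ℂ} (hω : DifferentiableOn ℂ ω (ball 0 1))
    (hmaps : Set.MapsTo ω (ball 0 1) (ball 0 1)) {z : ℂ} (hz : z ∈ ball (0:ℂ) 1) :
    (1 - ‖z‖ ^ 2) * (1 - ‖ω 0‖) / (1 + ‖ω 0‖)
      ≤ 1 - ‖ω z‖ ^ 2 := by
  have h0 : (0:ℂ) ∈ ball (0:ℂ) 1 := mem_ball_self one_pos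
  set a0 := ω 0 with ha0
  have ha : ‖a0‖ < 1 := by
    simpa using mem_ball_zero_iff.mp (hmaps h0)
  have habsω : ∀ w ∈ ball (0:ℂ) 1, ‖ω w‖ < 1 := fun w hw => by
    simpa using mem_ball_zero_iff.mp (hmaps hw)
  set φ : ℂ → ℂ := fun w => (ω w - a0) / (1 - (starRingEnd ℂ) a0 * ω w) with hφdef
  have hden : ∀ w ∈ ball (0:ℂ) 1, 1 - (starRingEnd ℂ) a0 * ω w ≠ 0 := by
    intro w hw hcontra
    have h1 : (starRingEnd ℂ) a0 * ω w = 1 := by linear_combination -hcontra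
    have h2 : ‖(starRingEnd ℂ) a0 * ω w‖ = 1 := by rw [h1, norm_one]
    rw [norm_mul, Complex.norm_conj] at h2
    nlinarith [norm_nonneg a0, norm_nonneg (ω w), habsω w hw]
  have hφdiff : DifferentiableOn ℂ φ (ball 0 1) :=
    DifferentiableOn.div (hω.sub (differentiableOn_const _))
      ((differentiableOn_const _).sub ((differentiableOn_const _).mul hω)) hden
  have hφmaps : Set.MapsTo φ (ball 0 1) (ball 0 1) := by
    intro w hw
    rw [mem_ball_zero_iff]
    exact mobius_lt_one (habsω w hw) ha
  have hφ0 : φ 0 = 0 := by simp [hφdef, ha0]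
  have hsch : ‖φ z‖ ≤ ‖z‖ :=
    Complex.norm_le_norm_of_mapsTo_ball hφdiff (hφmaps.mono_right ball_subset_closedBall) hφ0
      (by simpa using mem_ball_zero_iff.mp hz)
  -- turn into |ω z - a0| ≤ r * |1 - conj a0 * ω z|
  have hdenpos : 0 < ‖1 - (starRingEnd ℂ) a0 * ω z‖ :=
    norm_pos_iff.mpr (hden z hz)
  have habs : ‖ω z - a0‖ ≤ ‖z‖ * ‖1 - (starRingEnd ℂ) a0 * ω z‖ := by
    rw [hφdef] at hsch
    simp only [norm_div] at hsch
    calc ‖ω z - a0‖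
        = ‖ω z - a0‖ / ‖1 - (starRingEnd ℂ) a0 * ω z‖
          * ‖1 - (starRingEnd ℂ) a0 * ω z‖ := by rw [div_mul_cancel₀ _ hdenpos.ne']
      _ ≤ ‖z‖ * ‖1 - (starRingEnd ℂ) a0 * ω z‖ :=
          mul_le_mul_of_nonneg_right hsch hdenpos.le
  set r := ‖z‖ with hrdef
  set s := ‖ω z‖ with hsdef
  set a := ‖a0‖ with hadef
  set x := ((starRingEnd ℂ) a0 * ω z).re with hxdef
  have idA : Complex.normSq (ω z - a0) = s^2 - 2*x + a^2 := by
    rw [Complex.normSq_sub, ← Complex.sq_norm, ← Complex.sq_norm]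
    have : (ω z * (starRingEnd ℂ) a0).re = x := by rw [mul_comm]
    rw [this]; ring
  have idB : Complex.normSq (1 - (starRingEnd ℂ) a0 * ω z) = 1 - 2*x + a^2*s^2 := by
    rw [Complex.normSq_sub, ← Complex.sq_norm, ← Complex.sq_norm, norm_mul, Complex.norm_conj]
    have : ((1:ℂ) * (starRingEnd ℂ) ((starRingEnd ℂ) a0 * ω z)).re = x := by
      rw [one_mul, Complex.conj_re]
    rw [this]; simp; ring
  have hq : s^2 - 2*x + a^2 ≤ r^2 * (1 - 2*x + a^2*s^2) := by
    have h2 := mul_le_mul habs habs (norm_nonneg _) (by positivity)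
    rw [← Complex.sq_norm] at idA idB
    nlinarith [idA, idB, h2]
  have hx : |x| ≤ a * s := by
    calc |x| ≤ ‖(starRingEnd ℂ) a0 * ω z‖ := Complex.abs_re_le_norm _
      _ = a * s := by rw [norm_mul, Complex.norm_conj]
  have hxle := (abs_le.mp hx).2
  have hxge := (abs_le.mp hx).1
  have ha0' : 0 ≤ a := norm_nonneg _
  have hs0 : 0 ≤ s := norm_nonneg _
  have hr0 : 0 ≤ r := norm_nonneg _
  have hr1 : r < 1 := by simpa using mem_ball_zero_iff.mp hz
  have hs1 : s < 1 := habsω z hz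
  have hqq : s^2 + a^2 - r^2 - r^2*a^2*s^2 ≤ 2*a*s*(1-r^2) := by
    nlinarith [mul_nonneg (sub_nonneg.2 hxle) (by nlinarith : (0:ℝ) ≤ 1 - r^2)]
  have step1 : s * (1 + a*r) ≤ a + r := by
    by_contra hc
    push_neg at hc
    have h1 : 0 < s*(1+a*r) - (a+r) := by linarith
    have har : 0 < 1 - a*r := by nlinarith
    have h3 : (0:ℝ) < 1 + a*r := by nlinarith
    have h2 : 0 < s*(1-a*r) - (a-r) := by
      nlinarith [mul_pos h1 har, mul_nonneg hr0 (by nlinarith : (0:ℝ) ≤ 1 - a^2), h3]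
    nlinarith [mul_pos h1 h2, hqq]
  rw [div_le_iff₀ (by linarith : (0:ℝ) < 1 + a)]
  have h3 : (0:ℝ) < 1 + a*r := by nlinarith
  have hP : (0:ℝ) < (1+a*r)^2 := by positivity
  have hsq : s^2*(1+a*r)^2 ≤ (a+r)^2 := by
    nlinarith [mul_le_mul step1 step1 (mul_nonneg hs0 h3.le) (by linarith : (0:ℝ) ≤ a + r)]
  have key1 : (1-a^2)*(1-r^2) ≤ (1-s^2)*(1+a*r)^2 := by nlinarith [hsq]
  have t1 := mul_le_mul_of_nonneg_left key1 (by linarith : (0:ℝ) ≤ 1+a)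
  have t2 : 0 ≤ (1-a)*(1-r^2)*((1+a)^2 - (1+a*r)^2) := by
    nlinarith [mul_nonneg (mul_nonneg (sub_nonneg.2 ha.le)
      (by nlinarith : (0:ℝ) ≤ 1 - r^2))
      (mul_nonneg (by nlinarith : (0:ℝ) ≤ a - a*r) (by nlinarith : (0:ℝ) ≤ 2 + a + a*r))]
  have t3 : ((1-r^2)*(1-a))*(1+a*r)^2 ≤ ((1-s^2)*(1+a))*(1+a*r)^2 := by nlinarith [t1, t2]
  exact le_of_mul_le_mul_right t3 hP


private lemma growth_aux {ν K : ℝ} (hν : 0 < ν) (hK : 0 ≤ K) {φ : ℂ → ℂ}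
    (hφ : DifferentiableOn ℂ φ (ball 0 1))
    (hφ' : ∀ w ∈ ball (0:ℂ) 1,
      ‖deriv φ w‖ ≤ K * (1 - ‖w‖) ^ (-(ν + 1/2) : ℝ))
    {z : ℂ} (hz : z ∈ ball (0:ℂ) 1) :
    ‖φ z - φ 0‖ ≤ K *
      (if ν = 1/2 then -Real.log (1 - ‖z‖)
        else ((1 - ‖z‖) ^ ((1:ℝ)/2 - ν) - 1) / (ν - 1/2)) := by
  have hr0 : 0 ≤ ‖z‖ := norm_nonneg z
  have hr1 : ‖z‖ < 1 := by
    simpa using mem_ball_zero_iff.mp hz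
  set r := ‖z‖ with hrdef
  set B : ℝ → ℝ := fun t => K * (if ν = 1/2 then -Real.log (1 - t*r)
      else ((1 - t*r) ^ ((1:ℝ)/2 - ν) - 1) / (ν - 1/2)) with hBdef
  set B' : ℝ → ℝ := fun t => K * (r * (1 - t*r) ^ (-(ν + 1/2) : ℝ)) with hB'def
  set f : ℝ → ℂ := fun t => φ ((t:ℂ) * z) - φ 0 with hfdef
  set f' : ℝ → ℂ := fun t => deriv φ ((t:ℂ)*z) * z with hf'def
  have htr : ∀ t ∈ Icc (0:ℝ) 1, t * r < 1 := by
    intro t ht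
    calc t * r ≤ 1 * r := by
          exact mul_le_mul_of_nonneg_right ht.2 hr0
      _ = r := one_mul r
      _ < 1 := hr1
  have habs : ∀ t ∈ Icc (0:ℝ) 1, ‖(t:ℂ)*z‖ = t * r := by
    intro t ht
    rw [norm_mul, Complex.norm_real, Real.norm_eq_abs, _root_.abs_of_nonneg ht.1]
  have hmem : ∀ t ∈ Icc (0:ℝ) 1, ((t:ℂ)*z) ∈ ball (0:ℂ) 1 := by
    intro t ht
    rw [mem_ball_zero_iff, habs t ht]
    exact htr t ht
  have hpos : ∀ t ∈ Icc (0:ℝ) 1, 0 < 1 - t*r := fun t ht => by linarith [htr t ht]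
  have hfd : ∀ t ∈ Icc (0:ℝ) 1, HasDerivAt f (f' t) t := by
    intro t ht
    have h1 : HasDerivAt (fun t:ℝ => (t:ℂ)*z) z t := by
      simpa using (Complex.ofRealCLM.hasDerivAt (x := t)).mul_const z
    have h2 : DifferentiableAt ℂ φ ((t:ℂ)*z) :=
      hφ.differentiableAt (isOpen_ball.mem_nhds (hmem t ht))
    exact (h2.hasDerivAt.comp t h1).sub_const (φ 0)
  have hBd : ∀ t ∈ Icc (0:ℝ) 1, HasDerivAt B (B' t) t := by
    intro t ht
    have hlin : HasDerivAt (fun t:ℝ => 1 - t*r) (-r) t := by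
      simpa using ((hasDerivAt_id t).mul_const r).const_sub 1
    by_cases hcase : ν = 1/2
    · subst hcase
      have hlog : HasDerivAt (fun t:ℝ => Real.log (1 - t*r)) ((1-t*r)⁻¹ * (-r)) t :=
        by have hl := (Real.hasDerivAt_log (hpos t ht).ne').comp t hlin; exact hl
      have hDA := (hlog.neg).const_mul K
      have hfun : B = fun y => K * -Real.log (1 - y*r) := by
        funext y; rw [hBdef]; simp
      have hval : B' t = K * -((1-t*r)⁻¹ * (-r)) := by
        rw [hB'def]
        simp only
        rw [show (-((1:ℝ)/2 + 1/2) : ℝ) = (-1 : ℝ) by norm_num, Real.rpow_neg_one]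
        ring
      rw [hfun, hval]
      exact hDA
    · have hd : ν - 1/2 ≠ 0 := sub_ne_zero.mpr hcase
      have hrp : HasDerivAt (fun t:ℝ => (1 - t*r) ^ ((1:ℝ)/2 - ν))
          ((-r) * ((1:ℝ)/2 - ν) * (1 - t*r) ^ ((1:ℝ)/2 - ν - 1)) t :=
        hlin.rpow_const (Or.inl (hpos t ht).ne')
      have hDA := ((hrp.sub_const 1).div_const (ν - 1/2)).const_mul K
      have hfun : B = fun y => K * (((1 - y*r) ^ ((1:ℝ)/2 - ν) - 1) / (ν - 1/2)) := by
        funext y; rw [hBdef]; simp only [if_neg hcase]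
      have hval : B' t = K * ((-r) * ((1:ℝ)/2 - ν) * (1 - t*r) ^ ((1:ℝ)/2 - ν - 1) / (ν - 1/2)) := by
        rw [hB'def]
        simp only
        rw [show ((1:ℝ)/2 - ν - 1 : ℝ) = -(ν + 1/2) by ring]
        congr 1
        rw [eq_div_iff hd]
        ring
      rw [hfun, hval]
      exact hDA
  have key := image_norm_le_of_norm_deriv_right_le_deriv_boundary'
    (fun t ht => (hfd t ht).continuousAt.continuousWithinAt)
    (fun t ht => (hfd t (Ico_subset_Icc_self ht)).hasDerivWithinAt)
    (by
      have hf0 : f 0 = 0 := by simp [hfdef]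
      have hB0 : B 0 = 0 := by
        rw [hBdef]
        simp only [zero_mul, sub_zero, Real.log_one, neg_zero, Real.one_rpow, sub_self,
          zero_div, ite_self, mul_zero]
      rw [hf0, hB0, norm_zero])
    (fun t ht => (hBd t ht).continuousAt.continuousWithinAt)
    (fun t ht => (hBd t (Ico_subset_Icc_self ht)).hasDerivWithinAt)
    (by
      intro t ht
      have ht' := Ico_subset_Icc_self ht
      have h1 : ‖f' t‖ = ‖deriv φ ((t:ℂ)*z)‖ * r := by
        rw [hf'def]
        simp only [norm_mul]
        rw [hrdef]
      rw [h1, hB'def]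
      have h2 := hφ' _ (hmem t ht')
      rw [habs t ht'] at h2
      calc ‖deriv φ ((t:ℂ)*z)‖ * r
          ≤ (K * (1 - t*r) ^ (-(ν + 1/2) : ℝ)) * r :=
            mul_le_mul_of_nonneg_right h2 hr0
        _ = K * (r * (1 - t*r) ^ (-(ν + 1/2) : ℝ)) := by ring)
  have hfin := key (right_mem_Icc.mpr zero_le_one)
  have e1 : f 1 = φ z - φ 0 := by simp [hfdef]
  have e2 : B 1 = K * (if ν = 1/2 then -Real.log (1 - r)
      else ((1 - r) ^ ((1:ℝ)/2 - ν) - 1) / (ν - 1/2)) := by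
    simp [hBdef]
  rw [e1, e2] at hfin
  simpa using hfin


set_option maxHeartbeats 1000000 in
/-- Growth estimate: if `f = h + conj g` is a sense-preserving harmonic mapping on `𝔻`
with `β*_ν(f) ≤ M` and dilatation `ω_f = g'/h'`, then for `|z| = r < 1`,
`max{|h(z) − h(0)|, |g(z)|} ≤ M √((1+|ω_f(0)|)/(1−|ω_f(0)|)) h_ν(r)`, where
`h_ν(r) = −log(1−r)` if `ν = 1/2` and `h_ν(r) = ((1−r)^{1/2−ν} − 1)/(ν − 1/2)` otherwise. -/
theorem growth_estimate_Bloch_type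
    (ν : ℝ) (hν : 0 < ν) (h g : ℂ → ℂ)
    (hh : DifferentiableOn ℂ h (ball 0 1))
    (hg : DifferentiableOn ℂ g (ball 0 1))
    (hg0 : g 0 = 0)
    (hsp : ∀ z ∈ ball (0 : ℂ) 1, ‖deriv g z‖ < ‖deriv h z‖)
    (M : ℝ)
    (hM : ∀ z ∈ ball (0 : ℂ) 1,
      (1 - ‖z‖ ^ 2) ^ ν *
        Real.sqrt |‖deriv h z‖ ^ 2 - ‖deriv g z‖ ^ 2| ≤ M) :
    ∀ z ∈ ball (0 : ℂ) 1,
      max (‖h z - h 0‖) (‖g z‖)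
        ≤ M * Real.sqrt ((1 + ‖deriv g 0 / deriv h 0‖)
            / (1 - ‖deriv g 0 / deriv h 0‖)) *
          (if ν = 1 / 2 then -Real.log (1 - ‖z‖)
            else ((1 - ‖z‖) ^ (1 / 2 - ν) - 1) / (ν - 1 / 2)) := by
  intro z hz
  have h0 : (0:ℂ) ∈ ball (0:ℂ) 1 := mem_ball_self one_pos
  have hh'ne : ∀ w ∈ ball (0:ℂ) 1, deriv h w ≠ 0 := by
    intro w hw hc
    have := hsp w hw
    rw [hc, norm_zero] at this
    exact absurd this (not_lt.mpr (norm_nonneg _))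
  set ω : ℂ → ℂ := fun w => deriv g w / deriv h w with hωdef
  have hωdiff : DifferentiableOn ℂ ω (ball 0 1) :=
    DifferentiableOn.div
      ((hg.analyticOnNhd isOpen_ball).deriv.differentiableOn)
      ((hh.analyticOnNhd isOpen_ball).deriv.differentiableOn) hh'ne
  have hωmaps : MapsTo ω (ball 0 1) (ball 0 1) := by
    intro w hw
    rw [mem_ball_zero_iff, hωdef]
    simp only [norm_div]
    exact (div_lt_one (norm_pos_iff.mpr (hh'ne w hw))).mpr (hsp w hw)
  set a := ‖ω 0‖ with hadef
  have ha1 : a < 1 := by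
    simpa using mem_ball_zero_iff.mp (hωmaps h0)
  have ha0 : 0 ≤ a := norm_nonneg _
  have hM0 : 0 ≤ M :=
    le_trans (mul_nonneg (Real.rpow_nonneg (by simp) ν) (Real.sqrt_nonneg _)) (hM 0 h0)
  set C := Real.sqrt ((1 + a)/(1 - a)) with hCdef
  have hCpos : 0 < C := Real.sqrt_pos.mpr (div_pos (by linarith) (by linarith))
  have hK : 0 ≤ M * C := mul_nonneg hM0 hCpos.le
  have hkey : ∀ w ∈ ball (0:ℂ) 1,
      ‖deriv h w‖ ≤ M * C * (1 - ‖w‖) ^ (-(ν + 1/2) : ℝ) := by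
    intro w hw
    have hr1 : ‖w‖ < 1 := by
      simpa using mem_ball_zero_iff.mp hw
    have hr0 : 0 ≤ ‖w‖ := norm_nonneg w
    set r := ‖w‖ with hrdef
    set s := ‖ω w‖ with hsdef
    set Dh := ‖deriv h w‖ with hDhdef
    set Dg := ‖deriv g w‖ with hDgdef
    have hDh0 : 0 < Dh := norm_pos_iff.mpr (hh'ne w hw)
    have hDglt : Dg < Dh := hsp w hw
    have hDg0 : 0 ≤ Dg := norm_nonneg _
    have hseq : Dg = s * Dh := by
      rw [hsdef, hωdef]
      simp only [norm_div]
      field_simp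
      rw [hDgdef, hDhdef]
      exact (mul_div_cancel_right₀ _ (norm_pos_iff.mpr (hh'ne w hw)).ne').symm
    have hs1 : s < 1 := by
      simpa using mem_ball_zero_iff.mp (hωmaps hw)
    have hs0 : 0 ≤ s := norm_nonneg _
    have hsp2 := schwarz_pick_sq hωdiff hωmaps hw
    rw [← hadef, ← hsdef, ← hrdef] at hsp2
    -- rewrite hM
    have hM1 := hM w hw
    rw [← hrdef, ← hDhdef, ← hDgdef] at hM1
    have habs : |Dh^2 - Dg^2| = Dh^2 * (1 - s^2) := by
      rw [_root_.abs_of_nonneg (by nlinarith)]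
      rw [hseq]; ring
    rw [habs] at hM1
    have hsqrt : Real.sqrt (Dh^2 * (1-s^2)) = Dh * Real.sqrt (1-s^2) := by
      rw [Real.sqrt_mul (by positivity), Real.sqrt_sq hDh0.le]
    rw [hsqrt] at hM1
    -- lower bound the sqrt
    have h1r2 : (0:ℝ) < 1 - r^2 := by nlinarith
    have hs2 : Real.sqrt ((1 - r^2) * (1-a)/(1+a)) ≤ Real.sqrt (1 - s^2) :=
      Real.sqrt_le_sqrt hsp2
    have hsplit : Real.sqrt ((1 - r^2) * (1-a)/(1+a))
        = Real.sqrt (1 - r^2) * C⁻¹ := by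
      rw [mul_div_assoc, Real.sqrt_mul h1r2.le, hCdef, ← Real.sqrt_inv]
      congr 1
      rw [inv_div]
    rw [hsplit] at hs2
    -- combine
    have hcomb : (1 - r^2) ^ ν * (Dh * (Real.sqrt (1 - r^2) * C⁻¹)) ≤ M := by
      refine le_trans ?_ hM1
      calc (1 - r^2) ^ ν * (Dh * (Real.sqrt (1 - r^2) * C⁻¹))
          = ((1 - r^2) ^ ν * Dh) * (Real.sqrt (1 - r^2) * C⁻¹) := by ring
        _ ≤ ((1 - r^2) ^ ν * Dh) * Real.sqrt (1 - s^2) := by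
            exact mul_le_mul_of_nonneg_left hs2 (mul_nonneg (by positivity) hDh0.le)
        _ = (1 - r^2) ^ ν * (Dh * Real.sqrt (1 - s^2)) := by ring
    -- (1-r^2)^ν * sqrt(1-r^2) = (1-r^2)^(ν+1/2)
    have hpow : (1 - r^2) ^ (ν:ℝ) * Real.sqrt (1 - r^2) = (1 - r^2) ^ (ν + 1/2 : ℝ) := by
      rw [Real.sqrt_eq_rpow, ← Real.rpow_add h1r2]
    have hcomb2 : (1 - r^2) ^ (ν + 1/2 : ℝ) * Dh * C⁻¹ ≤ M := by
      calc (1 - r^2) ^ (ν + 1/2 : ℝ) * Dh * C⁻¹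
          = (1 - r^2) ^ (ν:ℝ) * (Dh * (Real.sqrt (1 - r^2) * C⁻¹)) := by
            rw [← hpow]; ring
        _ ≤ M := hcomb
    -- now solve for Dh
    have hppos : (0:ℝ) < (1 - r^2) ^ (ν + 1/2 : ℝ) := Real.rpow_pos_of_pos h1r2 _
    have hDh : Dh ≤ M * C * ((1 - r^2) ^ (ν + 1/2 : ℝ))⁻¹ := by
      have hfact : 0 ≤ C * ((1 - r^2) ^ (ν + 1/2 : ℝ))⁻¹ :=
        mul_nonneg hCpos.le (inv_nonneg.mpr hppos.le)
      calc Dh = ((1 - r^2) ^ (ν + 1/2 : ℝ) * Dh * C⁻¹) * (C * ((1 - r^2) ^ (ν + 1/2 : ℝ))⁻¹) := by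
            field_simp
        _ ≤ M * (C * ((1 - r^2) ^ (ν + 1/2 : ℝ))⁻¹) :=
            mul_le_mul_of_nonneg_right hcomb2 hfact
        _ = M * C * ((1 - r^2) ^ (ν + 1/2 : ℝ))⁻¹ := by ring
    -- compare (1-r^2)^{-(p)} with (1-r)^{-(p)}
    have hmono : ((1 - r^2) ^ (ν + 1/2 : ℝ))⁻¹ ≤ (1 - r) ^ (-(ν + 1/2) : ℝ) := by
      rw [← Real.rpow_neg h1r2.le]
      exact Real.rpow_le_rpow_of_nonpos (by linarith) (by nlinarith) (by linarith)
    calc Dh ≤ M * C * ((1 - r^2) ^ (ν + 1/2 : ℝ))⁻¹ := hDh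
      _ ≤ M * C * (1 - r) ^ (-(ν + 1/2) : ℝ) := by
          exact mul_le_mul_of_nonneg_left hmono hK
  have hkeyg : ∀ w ∈ ball (0:ℂ) 1,
      ‖deriv g w‖ ≤ M * C * (1 - ‖w‖) ^ (-(ν + 1/2) : ℝ) :=
    fun w hw => le_trans (hsp w hw).le (hkey w hw)
  have Hh := growth_aux hν hK hh hkey hz
  have Hg := growth_aux hν hK hg hkeyg hz
  rw [hg0, sub_zero] at Hg
  exact max_le Hh Hg
end

section
/- Let 0 < ν < 1/2 and let f = h + conj(g) be a sense-preserving harmonic mapping on 𝔻 with β*_ν(f) < ∞ and dilatation ω_f = g'/h'. Then for every z ∈ 𝔻, max{|h(z) − h(0)|, |g(z)|} ≤ β*_ν(f) · √((1+|ω_f(0)|)/(1−|ω_f(0)|)) · (1/2 − ν)^{−1}; in particular h, g, and f are bounded on 𝔻. -/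
open Complex Metric


lemma normSq_moebius_identity (u v : ℂ) :
    Complex.normSq (1 - (starRingEnd ℂ) u * v) - Complex.normSq (v - u)
      = (1 - Complex.normSq u) * (1 - Complex.normSq v) := by
  simp only [Complex.normSq_apply, Complex.sub_re, Complex.sub_im, Complex.mul_re, Complex.mul_im,
    Complex.one_re, Complex.one_im, Complex.conj_re, Complex.conj_im]
  ring

-- Schwarz-Pick lower bound on 1 - |ω z|^2
lemma sp_lemma (ω : ℂ → ℂ) (hω : DifferentiableOn ℂ ω (ball 0 1))
    (hωlt : ∀ z ∈ ball (0:ℂ) 1, ‖ω z‖ < 1) (z : ℂ) (hz : z ∈ ball (0:ℂ) 1) :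
    (1 - ‖z‖ ^ 2) * (1 - ‖ω 0‖) / (1 + ‖ω 0‖)
      ≤ 1 - ‖ω z‖ ^ 2 := by
  have h0D : (0:ℂ) ∈ ball (0:ℂ) 1 := mem_ball_self one_pos
  set w0 := ω 0 with hw0
  have ha : ‖w0‖ < 1 := hωlt 0 h0D
  have ha0 : 0 ≤ ‖w0‖ := norm_nonneg _
  have hns : ∀ w ∈ ball (0:ℂ) 1, Complex.normSq (ω w) < 1 := by
    intro w hw
    rw [← Complex.sq_norm]
    nlinarith [hωlt w hw, norm_nonneg (ω w)]
  have hnsle : ∀ w ∈ ball (0:ℂ) 1,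
      Complex.normSq (ω w - w0) < Complex.normSq (1 - (starRingEnd ℂ) w0 * ω w) := by
    intro w hw
    have hid := normSq_moebius_identity w0 (ω w)
    have h1 : Complex.normSq w0 < 1 := hns 0 h0D
    nlinarith [hns w hw]
  have hden_ne : ∀ w ∈ ball (0:ℂ) 1, (1 - (starRingEnd ℂ) w0 * ω w) ≠ 0 := by
    intro w hw H
    have h2 := hnsle w hw
    rw [H, map_zero] at h2
    exact absurd h2 (Complex.normSq_nonneg _).not_gt
  set ψ : ℂ → ℂ := fun w => (ω w - w0) / (1 - (starRingEnd ℂ) w0 * ω w) with hψ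
  have hψd : DifferentiableOn ℂ ψ (ball 0 1) :=
    (hω.sub_const w0).div ((differentiableOn_const _).sub ((differentiableOn_const _).mul hω))
      hden_ne
  have hψ0 : ψ 0 = 0 := by simp [hψ, hw0]
  have hmaps : Set.MapsTo ψ (ball 0 1) (ball (ψ 0) 1) := by
    rw [hψ0]
    intro w hw
    rw [mem_ball, dist_zero_right, hψ, norm_div, div_lt_one]
    · rw [Complex.norm_def, Complex.norm_def]
      exact Real.sqrt_lt_sqrt (Complex.normSq_nonneg _) (hnsle w hw)
    · exact norm_pos_iff.mpr (hden_ne w hw)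
  have key := Complex.dist_le_div_mul_dist_of_mapsTo_ball hψd (hmaps.mono_right ball_subset_closedBall) hz
  rw [hψ0, dist_zero_right, dist_zero_right,
    div_self one_ne_zero, one_mul] at key
  -- key : |ψ z| ≤ |z|
  have hdenpos : 0 < ‖1 - (starRingEnd ℂ) w0 * ω z‖ :=
    norm_pos_iff.mpr (hden_ne z hz)
  have hnum : ‖ω z - w0‖ ≤ ‖z‖ * ‖1 - (starRingEnd ℂ) w0 * ω z‖ := by
    rw [hψ, norm_div, div_le_iff₀ hdenpos] at key
    exact key
  -- square it
  have hsq : Complex.normSq (ω z - w0)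
      ≤ ‖z‖ ^ 2 * Complex.normSq (1 - (starRingEnd ℂ) w0 * ω z) := by
    rw [← Complex.sq_norm, ← Complex.sq_norm]
    nlinarith [norm_nonneg (ω z - w0), norm_nonneg z, hdenpos.le]
  -- lower bound on |den|
  have hden_lb : 1 - ‖w0‖ ≤ ‖1 - (starRingEnd ℂ) w0 * ω z‖ := by
    have h1 : ‖(starRingEnd ℂ) w0 * ω z‖ ≤ ‖w0‖ := by
      rw [norm_mul, Complex.norm_conj]
      exact mul_le_of_le_one_right ha0 (hωlt z hz).le
    calc 1 - ‖w0‖ ≤ 1 - ‖(starRingEnd ℂ) w0 * ω z‖ := by linarith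
    _ ≤ ‖1 - (starRingEnd ℂ) w0 * ω z‖ := by
        have := norm_sub_norm_le (1:ℂ) ((starRingEnd ℂ) w0 * ω z)
        simpa using this
  have hden_lb2 : (1 - ‖w0‖) ^ 2 ≤ Complex.normSq (1 - (starRingEnd ℂ) w0 * ω z) := by
    rw [← Complex.sq_norm]
    nlinarith [hden_lb, ha]
  have hid := normSq_moebius_identity w0 (ω z)
  have hz1 : ‖z‖ < 1 := by simpa [mem_ball, dist_zero_right] using hz
  have hz0 : 0 ≤ ‖z‖ := norm_nonneg z
  -- (1 - |w0|²)(1 - |ωz|²) ≥ (1 - |z|²) * normSq den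
  have hmain : (1 - ‖w0‖ ^ 2) * (1 - ‖ω z‖ ^ 2)
      ≥ (1 - ‖z‖ ^ 2) * (1 - ‖w0‖) ^ 2 := by
    have e1 : Complex.normSq w0 = ‖w0‖ ^ 2 := (Complex.sq_norm w0).symm
    have e2 : Complex.normSq (ω z) = ‖ω z‖ ^ 2 := (Complex.sq_norm (ω z)).symm
    have h1z : 0 ≤ 1 - ‖z‖ ^ 2 := by nlinarith
    have step1 : (1 - ‖z‖ ^ 2) * (1 - ‖w0‖) ^ 2
        ≤ (1 - ‖z‖ ^ 2) * Complex.normSq (1 - (starRingEnd ℂ) w0 * ω z) :=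
      mul_le_mul_of_nonneg_left hden_lb2 h1z
    have step2 : (1 - ‖z‖ ^ 2) * Complex.normSq (1 - (starRingEnd ℂ) w0 * ω z)
        ≤ Complex.normSq (1 - (starRingEnd ℂ) w0 * ω z) - Complex.normSq (ω z - w0) := by
      nlinarith [hsq]
    nlinarith [step1, step2, hid]
  have h1a : (0:ℝ) < 1 - ‖w0‖ := by linarith
  have key2 : 0 ≤ (1 - ‖w0‖) *
      ((1 - ‖ω z‖ ^ 2) * (1 + ‖w0‖)
        - (1 - ‖z‖ ^ 2) * (1 - ‖w0‖)) := by nlinarith [hmain]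
  have key3 := (mul_nonneg_iff_of_pos_left h1a).mp key2
  rw [div_le_iff₀ (by linarith : (0:ℝ) < 1 + ‖w0‖)]
  linarith


lemma radial_bound (ν : ℝ) (hν : 0 < ν) (hν2 : ν < 1/2) (K : ℝ) (hK : 0 ≤ K)
    (F : ℂ → ℂ) (hF : DifferentiableOn ℂ F (ball 0 1)) (hF0 : F 0 = 0)
    (hbd : ∀ w ∈ ball (0:ℂ) 1,
      ‖deriv F w‖ * (1 - ‖w‖ ^ 2) ^ (ν + 1/2 : ℝ) ≤ K)
    (z : ℂ) (hz : z ∈ ball (0:ℂ) 1) :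
    ‖F z‖ ≤ K * (1/2 - ν)⁻¹ := by
  set s : ℝ := ν + 1/2 with hs
  set r : ℝ := ‖z‖ with hr
  have hr1 : r < 1 := by simpa [mem_ball, dist_zero_right, hr] using hz
  have hr0 : 0 ≤ r := norm_nonneg z
  have huIcc : Set.uIcc (0:ℝ) 1 = Set.Icc 0 1 := Set.uIcc_of_le zero_le_one
  have htz : ∀ t ∈ Set.Icc (0:ℝ) 1, (t:ℂ) * z ∈ ball (0:ℂ) 1 := by
    intro t ht
    rw [mem_ball, dist_zero_right, norm_mul, Complex.norm_real, Real.norm_eq_abs,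
      _root_.abs_of_nonneg ht.1]
    nlinarith [ht.1, ht.2]
  have habs_tz : ∀ t ∈ Set.Icc (0:ℝ) 1, ‖(t:ℂ) * z‖ = t * r := by
    intro t ht
    rw [norm_mul, Complex.norm_real, Real.norm_eq_abs, _root_.abs_of_nonneg ht.1]
  have h1tr : ∀ t ∈ Set.Icc (0:ℝ) 1, 0 < 1 - t * r := by
    intro t ht; nlinarith [ht.1, ht.2]
  have hcont : ContinuousOn (deriv F) (ball 0 1) :=
    ((hF.analyticOnNhd isOpen_ball).deriv.differentiableOn).continuousOn
  have hderiv : ∀ t ∈ Set.uIcc (0:ℝ) 1,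
      HasDerivAt (fun t : ℝ => F ((t:ℂ) * z)) (deriv F ((t:ℂ) * z) * z) t := by
    intro t ht
    rw [huIcc] at ht
    have h1 : HasDerivAt F (deriv F ((t:ℂ) * z)) ((t:ℂ) * z) :=
      (hF.differentiableAt (isOpen_ball.mem_nhds (htz t ht))).hasDerivAt
    have h2 : HasDerivAt (fun w : ℂ => w * z) z (t:ℂ) := hasDerivAt_mul_const z
    have h3 := h1.comp (t:ℂ) h2
    have h4 := h3.comp_ofReal
    simpa [Function.comp] using h4
  have hmapsTo : Set.MapsTo (fun t : ℝ => (t:ℂ) * z) (Set.uIcc (0:ℝ) 1) (ball 0 1) := by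
    rw [huIcc]; exact htz
  have hcont' : ContinuousOn (fun t : ℝ => deriv F ((t:ℂ) * z) * z) (Set.uIcc (0:ℝ) 1) :=
    (hcont.comp ((Complex.continuous_ofReal.mul continuous_const).continuousOn) hmapsTo).mul
      continuousOn_const
  have hInt : IntervalIntegrable (fun t : ℝ => deriv F ((t:ℂ) * z) * z) MeasureTheory.volume 0 1 :=
    hcont'.intervalIntegrable
  have hFTC := intervalIntegral.integral_eq_sub_of_hasDerivAt hderiv hInt
  have hFz : F z = ∫ t in (0:ℝ)..1, deriv F ((t:ℂ) * z) * z := by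
    rw [hFTC]; push_cast; rw [one_mul, zero_mul, hF0, sub_zero]
  -- the bounding function
  set B : ℝ → ℝ := fun t => K * (r * (1 - t * r) ^ (-s : ℝ)) with hB
  have hBcont : ContinuousOn B (Set.uIcc (0:ℝ) 1) := by
    rw [huIcc]
    apply ContinuousOn.mul continuousOn_const
    apply ContinuousOn.mul continuousOn_const
    apply ContinuousOn.rpow_const
    · exact (continuousOn_const.sub (continuousOn_id.mul continuousOn_const))
    · intro t ht; exact Or.inl (h1tr t ht).ne'
  have hcompare : ∀ t ∈ Set.Icc (0:ℝ) 1, ‖deriv F ((t:ℂ) * z) * z‖ ≤ B t := by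
    intro t ht
    have hmem := htz t ht
    have hpos2 : (0:ℝ) < 1 - (t * r) ^ 2 := by nlinarith [h1tr t ht, mul_nonneg ht.1 hr0]
    have hb := hbd ((t:ℂ) * z) hmem
    rw [habs_tz t ht] at hb
    have hrpow_pos : (0:ℝ) < (1 - (t * r) ^ 2) ^ (s : ℝ) := Real.rpow_pos_of_pos hpos2 s
    have h5 : ‖deriv F ((t:ℂ) * z)‖ ≤ K * ((1 - (t * r) ^ 2) ^ (s:ℝ))⁻¹ := by
      rw [← div_eq_mul_inv, le_div_iff₀ hrpow_pos]; exact hb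
    have h6 : ((1 - (t * r) ^ 2) ^ (s:ℝ))⁻¹ = (1 - (t * r) ^ 2) ^ (-s : ℝ) :=
      (Real.rpow_neg hpos2.le s).symm
    have h7 : (1 - (t * r) ^ 2) ^ (-s : ℝ) ≤ (1 - t * r) ^ (-s : ℝ) := by
      apply Real.rpow_le_rpow_of_nonpos (h1tr t ht)
      · nlinarith [mul_nonneg (mul_nonneg ht.1 hr0) (h1tr t ht).le]
      · rw [hs]; linarith
    rw [norm_mul, ← hr]
    calc ‖deriv F ((t:ℂ) * z)‖ * r
        ≤ (K * ((1 - t * r) ^ (-s : ℝ))) * r := by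
          apply mul_le_mul_of_nonneg_right _ hr0
          rw [h6] at h5
          calc ‖deriv F ((t:ℂ) * z)‖ ≤ K * (1 - (t * r) ^ 2) ^ (-s : ℝ) := h5
          _ ≤ K * (1 - t * r) ^ (-s : ℝ) := mul_le_mul_of_nonneg_left h7 hK
      _ = B t := by rw [hB]; ring
  -- antiderivative of the bound
  set A : ℝ → ℝ := fun t => -((1/2 - ν)⁻¹ * (1 - t * r) ^ ((1:ℝ) - s)) with hA
  have hν3 : (0:ℝ) < 1/2 - ν := by linarith
  have hAderiv : ∀ t ∈ Set.uIcc (0:ℝ) 1, HasDerivAt A (r * (1 - t * r) ^ (-s : ℝ)) t := by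
    intro t ht
    rw [huIcc] at ht
    have hinner : HasDerivAt (fun t : ℝ => 1 - t * r) (-r) t := by
      simpa using ((hasDerivAt_id t).mul_const r).const_sub 1
    have hpow := hinner.rpow_const (p := (1:ℝ) - s) (Or.inl (h1tr t ht).ne')
    have := ((hpow.const_mul ((1/2 - ν)⁻¹)).neg)
    refine this.congr_deriv ?_
    rw [show (1:ℝ) - s - 1 = -s by rw [hs]; ring]
    rw [show -((1/2 - ν)⁻¹ * (-r * (1 - s) * (1 - t * r) ^ (-s : ℝ)))
        = ((1/2 - ν)⁻¹ * (1 - s)) * (r * (1 - t * r) ^ (-s : ℝ)) by ring]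
    rw [show (1:ℝ) - s = 1/2 - ν by rw [hs]; ring, inv_mul_cancel₀ hν3.ne', one_mul]
  have hIntB2 : IntervalIntegrable (fun t : ℝ => r * (1 - t * r) ^ (-s : ℝ))
      MeasureTheory.volume 0 1 := by
    apply ContinuousOn.intervalIntegrable
    apply ContinuousOn.mul continuousOn_const
    apply ContinuousOn.rpow_const
    · exact (continuousOn_const.sub (continuousOn_id.mul continuousOn_const))
    · intro t ht; rw [huIcc] at ht; exact Or.inl (h1tr t ht).ne'
  have hval := intervalIntegral.integral_eq_sub_of_hasDerivAt hAderiv hIntB2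
  have hA1 : A 1 - A 0 ≤ (1/2 - ν)⁻¹ := by
    rw [hA]
    simp only [zero_mul, sub_zero, one_mul, Real.one_rpow]
    have : (0:ℝ) ≤ (1 - r) ^ ((1:ℝ) - s) := Real.rpow_nonneg (by linarith) _
    have hinv : (0:ℝ) ≤ (1/2 - ν)⁻¹ := by positivity
    nlinarith
  have hIntB : IntervalIntegrable B MeasureTheory.volume 0 1 := hBcont.intervalIntegrable
  calc ‖F z‖ = ‖∫ t in (0:ℝ)..1, deriv F ((t:ℂ) * z) * z‖ := by
        rw [← hFz]
    _ ≤ ∫ t in (0:ℝ)..1, ‖deriv F ((t:ℂ) * z) * z‖ :=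
        intervalIntegral.norm_integral_le_integral_norm zero_le_one
    _ ≤ ∫ t in (0:ℝ)..1, B t := by
        apply intervalIntegral.integral_mono_on zero_le_one _ hIntB hcompare
        exact hcont'.norm.intervalIntegrable
    _ = K * ∫ t in (0:ℝ)..1, r * (1 - t * r) ^ (-s : ℝ) := by
        rw [hB, intervalIntegral.integral_const_mul]
    _ = K * (A 1 - A 0) := by rw [hval]
    _ ≤ K * (1/2 - ν)⁻¹ := mul_le_mul_of_nonneg_left hA1 hK

set_option maxHeartbeats 1000000 in
/-- For `0 < ν < 1/2`: if `f = h + conj g` is a sense-preserving harmonic mapping on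
`𝔻` with `β*_ν(f) ≤ M` and dilatation `ω_f = g'/h'`, then for every `z ∈ 𝔻`,
`max{|h(z) − h(0)|, |g(z)|} ≤ M √((1+|ω_f(0)|)/(1−|ω_f(0)|)) (1/2 − ν)⁻¹`;
in particular `h`, `g` and `f` are bounded on `𝔻`. -/
theorem bounded_for_small_nu_Bloch_type
    (ν : ℝ) (hν : 0 < ν) (hν2 : ν < 1 / 2) (h g : ℂ → ℂ)
    (hh : DifferentiableOn ℂ h (ball 0 1))
    (hg : DifferentiableOn ℂ g (ball 0 1))
    (hg0 : g 0 = 0)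
    (hsp : ∀ z ∈ ball (0 : ℂ) 1, ‖deriv g z‖ < ‖deriv h z‖)
    (M : ℝ)
    (hM : ∀ z ∈ ball (0 : ℂ) 1,
      (1 - ‖z‖ ^ 2) ^ ν *
        Real.sqrt |‖deriv h z‖ ^ 2 - ‖deriv g z‖ ^ 2| ≤ M) :
    (∀ z ∈ ball (0 : ℂ) 1,
      max (‖h z - h 0‖) (‖g z‖)
        ≤ M * Real.sqrt ((1 + ‖deriv g 0 / deriv h 0‖)
            / (1 - ‖deriv g 0 / deriv h 0‖)) * (1 / 2 - ν)⁻¹) ∧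
    (∃ C : ℝ, ∀ z ∈ ball (0 : ℂ) 1,
      ‖h z‖ ≤ C ∧ ‖g z‖ ≤ C ∧
        ‖h z + (starRingEnd ℂ) (g z)‖ ≤ C) := by
  have h0D : (0:ℂ) ∈ ball (0:ℂ) 1 := mem_ball_self one_pos
  have hν3 : (0:ℝ) < 1/2 - ν := by linarith
  -- h' ≠ 0
  have hh'ne : ∀ w ∈ ball (0:ℂ) 1, deriv h w ≠ 0 := by
    intro w hw
    have := hsp w hw
    intro H
    rw [H, norm_zero] at this
    exact absurd this (norm_nonneg _).not_gt
  -- ω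
  set ω : ℂ → ℂ := fun w => deriv g w / deriv h w with hωdef
  have hdh : DifferentiableOn ℂ (deriv h) (ball 0 1) :=
    (hh.analyticOnNhd isOpen_ball).deriv.differentiableOn
  have hdg : DifferentiableOn ℂ (deriv g) (ball 0 1) :=
    (hg.analyticOnNhd isOpen_ball).deriv.differentiableOn
  have hωd : DifferentiableOn ℂ ω (ball 0 1) := hdg.div hdh hh'ne
  have hωlt : ∀ w ∈ ball (0:ℂ) 1, ‖ω w‖ < 1 := by
    intro w hw
    rw [hωdef]
    simp only [norm_div]
    rw [div_lt_one (norm_pos_iff.mpr (hh'ne w hw))]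
    exact hsp w hw
  have habsω : ∀ w ∈ ball (0:ℂ) 1,
      ‖deriv g w‖ = ‖ω w‖ * ‖deriv h w‖ := by
    intro w hw
    rw [hωdef]
    simp only [norm_div]
    rw [div_mul_cancel₀ _ (norm_pos_iff.mpr (hh'ne w hw)).ne']
  set a : ℝ := ‖deriv g 0 / deriv h 0‖ with ha_def
  have haω : ‖ω 0‖ = a := rfl
  have ha1 : a < 1 := by rw [← haω]; exact hωlt 0 h0D
  have ha0 : 0 ≤ a := norm_nonneg _
  set Csp : ℝ := Real.sqrt ((1 + a) / (1 - a)) with hCsp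
  have hq : (0:ℝ) < (1 + a) / (1 - a) := by
    apply div_pos <;> linarith
  have hCsp2 : Csp ^ 2 = (1 + a) / (1 - a) := Real.sq_sqrt hq.le
  have hCsp0 : 0 ≤ Csp := Real.sqrt_nonneg _
  have hM0 : 0 ≤ M := by
    refine le_trans (mul_nonneg (Real.rpow_nonneg ?_ _) (Real.sqrt_nonneg _)) (hM 0 h0D)
    simp
  -- Schwarz-Pick
  have SP := sp_lemma ω hωd hωlt
  -- pointwise derivative bound
  have hHd : ∀ w ∈ ball (0:ℂ) 1,
      ‖deriv h w‖ * (1 - ‖w‖ ^ 2) ^ (ν + 1/2 : ℝ) ≤ M * Csp := by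
    intro w hw
    have hw1 : ‖w‖ < 1 := by simpa [mem_ball, dist_zero_right] using hw
    set x : ℝ := 1 - ‖w‖ ^ 2 with hx
    have hx0 : 0 < x := by rw [hx]; nlinarith [norm_nonneg w]
    have hJ0 : 0 ≤ ‖deriv h w‖ ^ 2 - ‖deriv g w‖ ^ 2 := by
      nlinarith [hsp w hw, norm_nonneg (deriv g w)]
    have hMw := hM w hw
    rw [_root_.abs_of_nonneg hJ0] at hMw
    set J : ℝ := ‖deriv h w‖ ^ 2 - ‖deriv g w‖ ^ 2 with hJdef
    set X : ℝ := (x ^ (ν:ℝ)) with hX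
    have hX0 : 0 < X := Real.rpow_pos_of_pos hx0 ν
    have hsqJ : X * Real.sqrt J ≤ M := hMw
    have hXJ : X ^ 2 * J ≤ M ^ 2 := by
      have hs := Real.sq_sqrt hJ0
      have h' : (X * Real.sqrt J) * (X * Real.sqrt J) ≤ M * M :=
        mul_le_mul hsqJ hsqJ (mul_nonneg hX0.le (Real.sqrt_nonneg J)) hM0
      nlinarith [h', hs]
    -- J = |h'|^2 (1 - |ω|^2)
    have hJeq : J = ‖deriv h w‖ ^ 2 * (1 - ‖ω w‖ ^ 2) := by
      rw [hJdef, habsω w hw]; ring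
    have hSPw := SP w hw
    rw [haω] at hSPw
    -- goal squared
    have hrpow_sq : ((x:ℝ) ^ (ν + 1/2 : ℝ)) ^ 2 = X ^ 2 * x := by
      rw [hX, sq, sq, ← Real.rpow_add hx0, ← Real.rpow_add hx0]
      rw [show (ν + 1/2) + (ν + 1/2) = (ν + ν) + 1 by ring, Real.rpow_add hx0,
        Real.rpow_add hx0, Real.rpow_one]
    have hgoal_sq : (‖deriv h w‖ * (x:ℝ) ^ (ν + 1/2 : ℝ)) ^ 2
        ≤ (M * Csp) ^ 2 := by
      rw [mul_pow, hrpow_sq, mul_pow, hCsp2]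
      have e3 : ‖deriv h w‖ ^ 2 * (x * ((1 - a) / (1 + a))) ≤ J := by
        rw [hJeq]
        apply mul_le_mul_of_nonneg_left _ (sq_nonneg _)
        calc x * ((1 - a) / (1 + a)) = x * (1 - a) / (1 + a) := by ring
          _ ≤ 1 - ‖ω w‖ ^ 2 := hSPw
      have hq' : (0:ℝ) < (1 - a) / (1 + a) := by apply div_pos <;> linarith
      rw [show M ^ 2 * ((1 + a) / (1 - a)) = M ^ 2 / ((1 - a) / (1 + a)) by
        field_simp, le_div_iff₀ hq']
      calc ‖deriv h w‖ ^ 2 * (X ^ 2 * x) * ((1 - a) / (1 + a))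
          = X ^ 2 * (‖deriv h w‖ ^ 2 * (x * ((1 - a) / (1 + a)))) := by ring
        _ ≤ X ^ 2 * J := mul_le_mul_of_nonneg_left e3 (sq_nonneg _)
        _ ≤ M ^ 2 := hXJ
    have h1 : 0 ≤ ‖deriv h w‖ * (x:ℝ) ^ (ν + 1/2 : ℝ) :=
      mul_nonneg (norm_nonneg _) (Real.rpow_nonneg hx0.le _)
    have h2 : 0 ≤ M * Csp := by positivity
    nlinarith [hgoal_sq, h1, h2]
  have hGd : ∀ w ∈ ball (0:ℂ) 1,
      ‖deriv g w‖ * (1 - ‖w‖ ^ 2) ^ (ν + 1/2 : ℝ) ≤ M * Csp := by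
    intro w hw
    have hw1 : ‖w‖ < 1 := by simpa [mem_ball, dist_zero_right] using hw
    refine le_trans ?_ (hHd w hw)
    apply mul_le_mul_of_nonneg_right (hsp w hw).le
    exact Real.rpow_nonneg (by nlinarith [norm_nonneg w]) _
  have hKnn : (0:ℝ) ≤ M * Csp := by positivity
  -- apply radial bound
  have hHb : ∀ z ∈ ball (0:ℂ) 1, ‖h z - h 0‖ ≤ M * Csp * (1/2 - ν)⁻¹ := by
    intro z hz
    have hF : DifferentiableOn ℂ (fun w => h w - h 0) (ball 0 1) := hh.sub_const (h 0)
    have hdF : ∀ w ∈ ball (0:ℂ) 1, deriv (fun w => h w - h 0) w = deriv h w := by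
      intro w hw; rw [deriv_sub_const]
    have hbd' : ∀ w ∈ ball (0:ℂ) 1,
        ‖deriv (fun w => h w - h 0) w‖ * (1 - ‖w‖ ^ 2) ^ (ν + 1/2 : ℝ)
          ≤ M * Csp := by
      intro w hw
      rw [hdF w hw]
      exact hHd w hw
    exact radial_bound ν hν hν2 (M * Csp) hKnn (fun w => h w - h 0) hF (sub_self (h 0)) hbd' z hz
  have hGb : ∀ z ∈ ball (0:ℂ) 1, ‖g z‖ ≤ M * Csp * (1/2 - ν)⁻¹ :=
    fun z hz => radial_bound ν hν hν2 (M * Csp) hKnn g hg hg0 hGd z hz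
  constructor
  · intro z hz
    exact max_le (hHb z hz) (hGb z hz)
  · refine ⟨‖h 0‖ + 2 * (M * Csp * (1/2 - ν)⁻¹), fun z hz => ?_⟩
    have hB0 : 0 ≤ M * Csp * (1/2 - ν)⁻¹ := by positivity
    have h1 : ‖h z‖ ≤ ‖h 0‖ + M * Csp * (1/2 - ν)⁻¹ := by
      calc ‖h z‖ = ‖h 0 + (h z - h 0)‖ := by ring_nf
        _ ≤ ‖h 0‖ + ‖h z - h 0‖ := norm_add_le _ _
        _ ≤ ‖h 0‖ + M * Csp * (1/2 - ν)⁻¹ := by linarith [hHb z hz]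
    refine ⟨by linarith, by linarith [hGb z hz, norm_nonneg (h 0)], ?_⟩
    calc ‖h z + (starRingEnd ℂ) (g z)‖
        ≤ ‖h z‖ + ‖(starRingEnd ℂ) (g z)‖ := norm_add_le _ _
      _ = ‖h z‖ + ‖g z‖ := by rw [Complex.norm_conj]
      _ ≤ ‖h 0‖ + 2 * (M * Csp * (1/2 - ν)⁻¹) := by linarith [hGb z hz]
end

section
/- Let ν > 0 and let f = h + conj(g) be a sense-preserving harmonic mapping on 𝔻 with β*_ν(f) < ∞ and dilatation ω_f = g'/h', where h(z) = Σ_{n≥0} a_n z^n and g(z) = Σ_{n≥1} b_n z^n. Then |b_1| < |a_1| ≤ β*_ν(f)/√(1 − |ω_f(0)|²), and for every integer n ≥ 2, max{|a_n|, |b_n|} ≤ β*_ν(f) · (e/(2ν+1))^{ν+1/2} · √((1+|ω_f(0)|)/(1−|ω_f(0)|)) · (n + 2ν)^{ν−1/2}. -/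
open Complex Metric

/-! ### Auxiliary lemmas -/

private lemma log_pade {x : ℝ} (hx : 0 ≤ x) : Real.log (1+x) ≤ x*(6+x)/(6+4*x) := by
  have key : ∀ y ∈ Set.Ici (0:ℝ), Real.log (1+y) - y*(6+y)/(6+4*y) ≤ 0 := by
    have hmono : MonotoneOn (fun y : ℝ => y*(6+y)/(6+4*y) - Real.log (1+y)) (Set.Ici 0) := by
      have hder : ∀ y ∈ Set.Ioi (0:ℝ), HasDerivAt (fun y : ℝ => y*(6+y)/(6+4*y) - Real.log (1+y))
          (((6+2*y)*(6+4*y) - (y*(6+y))*4)/(6+4*y)^2 - 1/(1+y)) y := by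
        intro y hy
        have hy0 : (0:ℝ) < y := hy
        have h1 : (6+4*y) ≠ 0 := by positivity
        have h2 : (1+y) ≠ 0 := by positivity
        have hd1 : HasDerivAt (fun y : ℝ => y*(6+y)/(6+4*y))
            (((6+2*y)*(6+4*y) - (y*(6+y))*4)/(6+4*y)^2) y := by
          have hu : HasDerivAt (fun y : ℝ => y*(6+y)) (6+2*y) y := by
            have := ((hasDerivAt_id' y).mul ((hasDerivAt_id' y).const_add (6:ℝ)))
            exact this.congr_deriv (by ring)
          have hv : HasDerivAt (fun y : ℝ => 6+4*y) 4 y := by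
            have := ((hasDerivAt_id' y).const_mul (4:ℝ)).const_add (6:ℝ)
            simpa using this
          exact hu.div hv h1
        have hd2 : HasDerivAt (fun y : ℝ => Real.log (1+y)) (1/(1+y)) y := by
          exact ((hasDerivAt_id' y).const_add 1).log h2
        exact hd1.sub hd2
      apply monotoneOn_of_deriv_nonneg (convex_Ici 0)
      · apply ContinuousOn.sub
        · apply ContinuousOn.div
          · fun_prop
          · fun_prop
          · intro y hy; have : (0:ℝ) ≤ y := hy; positivity
        · apply ContinuousOn.log
          · fun_prop
          · intro y hy; have : (0:ℝ) ≤ y := hy; positivity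
      · intro y hy
        rw [interior_Ici] at hy
        exact (hder y hy).differentiableAt.differentiableWithinAt
      · intro y hy
        rw [interior_Ici] at hy
        rw [(hder y hy).deriv]
        have hy0 : (0:ℝ) < y := hy
        rw [sub_nonneg, div_le_div_iff₀ (by positivity) (by positivity)]
        nlinarith [pow_pos hy0 3]
    intro y hy
    have := hmono (Set.self_mem_Ici) hy hy
    simp only [add_zero, Real.log_one, mul_zero, zero_mul, zero_div, sub_zero, zero_sub] at this
    linarith [this]
  linarith [key x hx]

private lemma keyE {m t : ℝ} (hm : 1 ≤ m) (ht : 1 ≤ t) :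
    2*(6*m+4*t)*((t-1)*(6*m+t+5)) ≤ 6*t^2*((m+1)*(3*m+2*t+1)) := by
  nlinarith [sq_nonneg (t-2), mul_nonneg (sub_nonneg.2 hm) (sq_nonneg (t-2)),
    mul_nonneg (mul_nonneg (sub_nonneg.2 hm) (sub_nonneg.2 hm)) (sq_nonneg (t-2)),
    mul_nonneg (sub_nonneg.2 ht) (sq_nonneg (t - 11/10 - 1)),
    mul_nonneg (sub_nonneg.2 ht) (sq_nonneg (t-2)),
    sq_nonneg (t - 571/490 - 1), sq_nonneg (m-1), sq_nonneg (t-1),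
    mul_nonneg (sub_nonneg.2 hm) (sub_nonneg.2 ht)]

private lemma keyG {m t : ℝ} (hm : 1 ≤ m) (ht : 1 ≤ t) :
    Real.log (1 + (t-1)/(m+1)) + (m/2) * Real.log (1 + t/m) ≤ t/2 := by
  have hm0 : (0:ℝ) < m := by linarith
  have hm1 : (0:ℝ) < m + 1 := by linarith
  have ht0 : (0:ℝ) < t := by linarith
  have ht1 : (0:ℝ) ≤ t - 1 := by linarith
  have hy : (0:ℝ) ≤ (t-1)/(m+1) := by positivity
  have hx : (0:ℝ) ≤ t/m := by positivity
  have h1 : Real.log (1 + (t-1)/(m+1)) ≤ (t-1)*(6*m+t+5)/((m+1)*(6*m+4*t+2)) := by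
    refine (log_pade hy).trans_eq ?_
    field_simp
    ring
  have h2 : (m/2) * Real.log (1 + t/m) ≤ t*(6*m+t)/(2*(6*m+4*t)) := by
    have := log_pade hx
    have e : (t/m)*(6+t/m)/(6+4*(t/m)) = t*(6*m+t)/(m*(6*m+4*t)) := by
      field_simp
    rw [e] at this
    calc (m/2) * Real.log (1 + t/m) ≤ (m/2) * (t*(6*m+t)/(m*(6*m+4*t))) := by
          exact mul_le_mul_of_nonneg_left this (by positivity)
      _ = t*(6*m+t)/(2*(6*m+4*t)) := by field_simp
  have h3 : (t-1)*(6*m+t+5)/((m+1)*(6*m+4*t+2)) + t*(6*m+t)/(2*(6*m+4*t)) ≤ t/2 := by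
    rw [div_add_div _ _ (by positivity) (by positivity),
      div_le_div_iff₀ (by positivity) (by positivity)]
    nlinarith [keyE hm ht, mul_pos hm0 ht0, sq_nonneg t]
  linarith

private lemma star_core {ν : ℝ} (hν : 0 < ν) {n : ℕ} (hn : 2 ≤ n) :
    (n:ℝ) + 2*ν ≤ (n:ℝ) * (((n:ℝ)-1)/((n:ℝ)+2*ν)) ^ (((n:ℝ)-1)/2) * Real.exp (ν+1/2) := by
  set N : ℝ := (n:ℝ) with hN
  have hN2 : (2:ℝ) ≤ N := by rw [hN]; exact_mod_cast hn
  have hm : (1:ℝ) ≤ N - 1 := by linarith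
  have hm0 : (0:ℝ) < N - 1 := by linarith
  have hA : (0:ℝ) < N + 2*ν := by linarith
  have hN0 : (0:ℝ) < N := by linarith
  have hs : (0:ℝ) < (N-1)/(N+2*ν) := by positivity
  have key := keyG (m := N - 1) (t := 2*ν + 1) hm (by linarith)
  have e1 : 1 + (2*ν+1-1)/(N-1+1) = (N+2*ν)/N := by
    field_simp
    ring
  have e2 : 1 + (2*ν+1)/(N-1) = (N+2*ν)/(N-1) := by
    field_simp
    ring
  rw [e1, e2] at key
  have e3 : Real.log ((N+2*ν)/(N-1)) = - Real.log ((N-1)/(N+2*ν)) := by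
    rw [← Real.log_inv]
    congr 1
    field_simp
  have key2 : Real.log ((N+2*ν)/N) ≤ (ν+1/2) + ((N-1)/2) * Real.log ((N-1)/(N+2*ν)) := by
    rw [e3] at key
    nlinarith [key]
  have h4 : (N+2*ν)/N ≤ (((N:ℝ)-1)/(N+2*ν)) ^ ((N-1)/2) * Real.exp (ν+1/2) := by
    have := Real.exp_le_exp.2 key2
    rw [Real.exp_log (by positivity), Real.exp_add, mul_comm ((N-1)/2), Real.exp_mul,
      Real.exp_log hs] at this
    linarith [this]
  calc N + 2*ν = N * ((N+2*ν)/N) := by field_simp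
    _ ≤ N * ((((N:ℝ)-1)/(N+2*ν)) ^ ((N-1)/2) * Real.exp (ν+1/2)) :=
        mul_le_mul_of_nonneg_left h4 hN0.le
    _ = N * (((N:ℝ)-1)/(N+2*ν)) ^ ((N-1)/2) * Real.exp (ν+1/2) := by ring

private lemma star {ν : ℝ} (hν : 0 < ν) {n : ℕ} (hn : 2 ≤ n) :
    1 ≤ (Real.exp 1/(2*ν+1))^(ν+1/2:ℝ) * (((n:ℝ)+2*ν)^(ν-1/2:ℝ)
        * ((n:ℝ) * (Real.sqrt (((n:ℝ)-1)/((n:ℝ)+2*ν)))^(n-1)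
          * ((2*ν+1)/((n:ℝ)+2*ν))^(ν+1/2:ℝ))) := by
  have hN2 : (2:ℝ) ≤ (n:ℝ) := by exact_mod_cast hn
  have hA : (0:ℝ) < (n:ℝ) + 2*ν := by linarith
  have hN0 : (0:ℝ) < (n:ℝ) := by linarith
  have ht : (0:ℝ) < 2*ν+1 := by linarith
  have hs : (0:ℝ) < ((n:ℝ)-1)/((n:ℝ)+2*ν) := by
    apply div_pos (by linarith) hA
  set s : ℝ := ((n:ℝ)-1)/((n:ℝ)+2*ν) with hsdef
  have hr : (Real.sqrt s)^(n-1) = s ^ ((((n:ℝ))-1)/2 : ℝ) := by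
    rw [Real.sqrt_eq_rpow, ← Real.rpow_natCast (s^((1:ℝ)/2)) (n-1), ← Real.rpow_mul hs.le]
    congr 1
    have : ((n - 1 : ℕ) : ℝ) = (n:ℝ) - 1 := by
      have : 1 ≤ n := by omega
      push_cast [this]; ring
    rw [this]; ring
  rw [hr]
  rw [Real.div_rpow (Real.exp_pos 1).le ht.le, Real.div_rpow ht.le hA.le,
    Real.exp_one_rpow]
  have e1 : ((n:ℝ)+2*ν)^(ν-1/2:ℝ) = ((n:ℝ)+2*ν)^(ν+1/2:ℝ) / ((n:ℝ)+2*ν) := by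
    rw [← Real.rpow_sub_one hA.ne']
    ring_nf
  rw [e1]
  have htp : (0:ℝ) < (2*ν+1)^(ν+1/2:ℝ) := Real.rpow_pos_of_pos ht _
  have hAp : (0:ℝ) < ((n:ℝ)+2*ν)^(ν+1/2:ℝ) := Real.rpow_pos_of_pos hA _
  have core := star_core hν hn
  rw [← hsdef] at core
  have hsp : (0:ℝ) < s ^ ((((n:ℝ))-1)/2 : ℝ) := Real.rpow_pos_of_pos hs _
  rw [← sub_nonneg] at core ⊢
  have expand : Real.exp (ν+1/2) / (2*ν+1)^(ν+1/2:ℝ) * (((n:ℝ)+2*ν)^(ν+1/2:ℝ) / ((n:ℝ)+2*ν)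
      * ((n:ℝ) * s ^ ((((n:ℝ))-1)/2 : ℝ) * ((2*ν+1)^(ν+1/2:ℝ) / ((n:ℝ)+2*ν)^(ν+1/2:ℝ)))) - 1
      = ((n:ℝ) * s ^ ((((n:ℝ))-1)/2 : ℝ) * Real.exp (ν+1/2) - ((n:ℝ)+2*ν)) / ((n:ℝ)+2*ν) := by
    field_simp
  rw [expand]
  positivity

private lemma emetric_unit_ball : Metric.eball (0:ℂ) 1 = ball (0:ℂ) 1 := by
  rw [show (1:ENNReal) = ((1:NNReal):ENNReal) by norm_num, Metric.eball_coe]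
  norm_num

private lemma hasFPS {F : ℂ → ℂ} {c : ℕ → ℂ}
    (hF : ∀ z ∈ ball (0:ℂ) 1, HasSum (fun n => c n * z^n) (F z)) :
    HasFPowerSeriesOnBall F (FormalMultilinearSeries.ofScalars ℂ c) 0 1 := by
  constructor
  · apply ENNReal.le_of_forall_nnreal_lt
    intro q hq
    have hq1 : (q:ℝ) < 1 := by exact_mod_cast hq
    have hzball : ((q:ℝ) : ℂ) ∈ ball (0:ℂ) 1 := by
      simp only [mem_ball, dist_zero_right, Complex.norm_real, Real.norm_eq_abs]
      rwa [_root_.abs_of_nonneg q.coe_nonneg]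
    have hsum := (hF _ hzball).summable
    have hb : BddAbove (Set.range fun n => ‖c n * ((q:ℝ):ℂ)^n‖) :=
      (hsum.tendsto_atTop_zero.norm).bddAbove_range
    obtain ⟨C, hC⟩ := hb
    apply FormalMultilinearSeries.le_radius_of_bound _ C
    intro n
    have h1 : ‖FormalMultilinearSeries.ofScalars ℂ c n‖ = ‖c n‖ :=
      FormalMultilinearSeries.ofScalars_norm _ _ _
    rw [h1]
    have h2 : ‖c n * ((q:ℝ):ℂ)^n‖ = ‖c n‖ * (q:ℝ)^n := by
      rw [norm_mul, norm_pow]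
      simp [Complex.norm_real, _root_.abs_of_nonneg q.coe_nonneg]
    rw [← h2]
    exact hC ⟨n, rfl⟩
  · exact one_pos
  · intro y hy
    rw [emetric_unit_ball] at hy
    have := hF y hy
    rw [zero_add]
    have e : (fun n => (FormalMultilinearSeries.ofScalars ℂ c n) fun _ => y) = fun n => c n * y ^ n := by
      funext k
      rw [FormalMultilinearSeries.ofScalars_apply_eq]
      simp [smul_eq_mul]
    rw [e]; exact this

private lemma coeff_eq {F : ℂ → ℂ} {c : ℕ → ℂ}
    (hF : ∀ z ∈ ball (0:ℂ) 1, HasSum (fun n => c n * z^n) (F z)) (n : ℕ) :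
    iteratedDeriv n F 0 = (n.factorial : ℂ) * c n := by
  have H := (hasFPS hF).factorial_smul (1 : ℂ) n
  rw [FormalMultilinearSeries.ofScalars_apply_eq] at H
  rw [iteratedDeriv_eq_iteratedFDeriv, ← H]
  simp [smul_eq_mul]

private lemma cauchy_bound {G : ℂ → ℂ} {r K : ℝ} (hr0 : 0 < r)
    (hd : DifferentiableOn ℂ G (closedBall (0:ℂ) r))
    (hK : ∀ z ∈ closedBall (0:ℂ) r, ‖G z‖ ≤ K) (k : ℕ) :
    ‖iteratedDeriv k G 0‖ ≤ (k.factorial : ℝ) * K / r^k := by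
  have hK0 : 0 ≤ K := le_trans (norm_nonneg _) (hK 0 (mem_closedBall_self hr0.le))
  set R : NNReal := r.toNNReal with hR
  have hRr : (R : ℝ) = r := Real.coe_toNNReal r hr0.le
  have hRpos : 0 < R := by
    simpa [hR] using Real.toNNReal_pos.2 hr0
  have hd' : DifferentiableOn ℂ G (closedBall (0:ℂ) (R:ℝ)) := by rwa [hRr]
  have HQ : HasFPowerSeriesOnBall G (cauchyPowerSeries G 0 (R:ℝ)) 0 (R : ENNReal) :=
    hd'.hasFPowerSeriesOnBall hRpos
  have H := HQ.factorial_smul (1 : ℂ) k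
  have hiter : iteratedDeriv k G 0
      = (k.factorial : ℂ) * (cauchyPowerSeries G 0 (R:ℝ) k fun _ => 1) := by
    rw [iteratedDeriv_eq_iteratedFDeriv, ← H, nsmul_eq_mul]
  rw [hiter, norm_mul]
  have h1 : ‖(k.factorial : ℂ)‖ = (k.factorial : ℝ) := by
    simp [Complex.norm_natCast]
  rw [h1]
  rw [mul_div_assoc]
  apply mul_le_mul_of_nonneg_left _ (by positivity)
  have h2 : ‖cauchyPowerSeries G 0 (R:ℝ) k fun _ => 1‖ ≤ ‖cauchyPowerSeries G 0 (R:ℝ) k‖ := by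
    have := (cauchyPowerSeries G 0 (R:ℝ) k).le_opNorm (fun _ => (1:ℂ))
    simpa using this
  refine h2.trans ((norm_cauchyPowerSeries_le G 0 (R:ℝ) k).trans ?_)
  rw [hRr]
  have hcont : Continuous fun θ : ℝ => ‖G (circleMap 0 r θ)‖ := by
    apply Continuous.norm
    apply hd.continuousOn.comp_continuous (continuous_circleMap 0 r)
    intro θ
    simp [mem_closedBall, circleMap, _root_.abs_of_nonneg hr0.le]
  have hint : (∫ θ : ℝ in (0)..2 * Real.pi, ‖G (circleMap 0 r θ)‖) ≤ 2 * Real.pi * K := by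
    have := intervalIntegral.integral_mono_on (μ := MeasureTheory.volume) (a := 0)
      (b := 2*Real.pi) (f := fun θ : ℝ => ‖G (circleMap 0 r θ)‖) (g := fun _ => K)
      (by positivity) (hcont.intervalIntegrable _ _) (intervalIntegrable_const)
      (fun θ _ => hK _ (by simp [mem_closedBall, circleMap, _root_.abs_of_nonneg hr0.le]))
    simpa using this
  calc ((2 * Real.pi)⁻¹ * ∫ θ : ℝ in (0)..2 * Real.pi, ‖G (circleMap 0 r θ)‖) * |r|⁻¹ ^ k
      ≤ ((2 * Real.pi)⁻¹ * (2 * Real.pi * K)) * |r|⁻¹ ^ k := by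
        apply mul_le_mul_of_nonneg_right _ (by positivity)
        apply mul_le_mul_of_nonneg_left hint (by positivity)
    _ = K / r^k := by
        rw [_root_.abs_of_nonneg hr0.le]
        rw [inv_mul_cancel_left₀ (by positivity)]
        rw [div_eq_mul_inv, inv_pow]


private lemma moebius_normSq (c u : ℂ) :
    Complex.normSq (1 - (starRingEnd ℂ) c * u) - Complex.normSq (u - c)
      = (1 - Complex.normSq c) * (1 - Complex.normSq u) := by
  simp [Complex.normSq_apply, Complex.mul_re, Complex.mul_im, Complex.sub_re, Complex.sub_im,
    Complex.one_re, Complex.one_im, Complex.conj_re, Complex.conj_im]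
  ring

private lemma denom_ne {c u : ℂ} (hc : ‖c‖ < 1) (hu : ‖u‖ < 1) :
    1 - (starRingEnd ℂ) c * u ≠ 0 := by
  intro hcontra
  have h1 : ‖(starRingEnd ℂ) c * u‖ = ‖c‖ * ‖u‖ := by
    rw [norm_mul, Complex.norm_conj]
  have h2 : ‖(starRingEnd ℂ) c * u‖ < 1 := by
    rw [h1]
    calc ‖c‖ * ‖u‖ ≤ ‖c‖ * 1 :=
        mul_le_mul_of_nonneg_left hu.le (norm_nonneg _)
      _ < 1 := by simpa using hc
  have : (1:ℂ) = (starRingEnd ℂ) c * u := by linear_combination hcontra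
  rw [← this] at h2
  simp at h2

private lemma schwarz_pick {ω : ℂ → ℂ} (hω : DifferentiableOn ℂ ω (ball (0:ℂ) 1))
    (hmaps : ∀ z ∈ ball (0:ℂ) 1, ‖ω z‖ < 1) {z : ℂ} (hz : z ∈ ball (0:ℂ) 1) :
    (1 - ‖z‖^2) * ((1 - ‖ω 0‖)/(1 + ‖ω 0‖))
      ≤ 1 - ‖ω z‖^2 := by
  have h0 : (0:ℂ) ∈ ball (0:ℂ) 1 := by simp
  set c := ω 0 with hcdef
  have hc : ‖c‖ < 1 := hmaps 0 h0
  set F : ℂ → ℂ := fun w => (ω w - c)/(1 - (starRingEnd ℂ) c * ω w) with hFdef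
  have hFdiff : DifferentiableOn ℂ F (ball (0:ℂ) 1) := by
    apply DifferentiableOn.div
    · exact hω.sub (differentiableOn_const c)
    · exact (differentiableOn_const 1).sub ((differentiableOn_const _).mul hω)
    · intro w hw
      exact denom_ne hc (hmaps w hw)
  have habsF : ∀ w ∈ ball (0:ℂ) 1, ‖F w‖ < 1 := by
    intro w hw
    have hu : ‖ω w‖ < 1 := hmaps w hw
    have hden := denom_ne hc hu
    rw [hFdef]
    simp only [norm_div]
    rw [div_lt_one (norm_pos_iff.2 hden)]
    have hID := moebius_normSq c (ω w)
    have hc2 : Complex.normSq c < 1 := by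
      rw [← Complex.sq_norm]; nlinarith [norm_nonneg c]
    have hu2 : Complex.normSq (ω w) < 1 := by
      rw [← Complex.sq_norm]; nlinarith [norm_nonneg (ω w)]
    have h1 : Complex.normSq (ω w - c) < Complex.normSq (1 - (starRingEnd ℂ) c * (ω w)) := by
      nlinarith [mul_pos (sub_pos.2 hc2) (sub_pos.2 hu2)]
    have e1 : ‖ω w - c‖ ^ 2 < ‖1 - (starRingEnd ℂ) c * ω w‖ ^ 2 := by
      rw [Complex.sq_norm, Complex.sq_norm]; exact h1
    exact lt_of_pow_lt_pow_left₀ 2 (norm_nonneg _) e1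
  have hFmaps : Set.MapsTo F (ball (0:ℂ) 1) (ball (0:ℂ) 1) := by
    intro w hw
    simpa [mem_ball, Complex.dist_eq] using habsF w hw
  have hF0 : F 0 = 0 := by
    rw [hFdef]
    simp [← hcdef]
  have hSch : ‖F z‖ ≤ ‖z‖ :=
    Complex.norm_le_norm_of_mapsTo_ball hFdiff (hFmaps.mono_right ball_subset_closedBall) hF0 (by simpa [mem_ball, Complex.dist_eq] using hz)
  -- unpack
  have hu : ‖ω z‖ < 1 := hmaps z hz
  have hzlt : ‖z‖ < 1 := by simpa [mem_ball, Complex.dist_eq] using hz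
  have hden := denom_ne hc hu
  have hkey : Complex.normSq (ω z - c) ≤ ‖z‖ ^ 2 * Complex.normSq (1 - (starRingEnd ℂ) c * ω z) := by
    have := pow_le_pow_left₀ (norm_nonneg _) hSch 2
    rw [hFdef] at this
    simp only [norm_div, div_pow] at this
    rw [div_le_iff₀ (pow_pos (norm_pos_iff.2 hden) 2)] at this
    calc Complex.normSq (ω z - c) = ‖ω z - c‖ ^ 2 := (Complex.sq_norm _).symm
      _ ≤ ‖z‖ ^ 2 * ‖1 - (starRingEnd ℂ) c * ω z‖ ^ 2 := by
          linarith [this]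
      _ = ‖z‖ ^ 2 * Complex.normSq (1 - (starRingEnd ℂ) c * ω z) := by
          rw [Complex.sq_norm (1 - (starRingEnd ℂ) c * ω z)]
  have hID := moebius_normSq c (ω z)
  have hdlow : (1 - ‖c‖)^2 ≤ Complex.normSq (1 - (starRingEnd ℂ) c * ω z) := by
    have h1 : ‖(starRingEnd ℂ) c * ω z‖ ≤ ‖c‖ := by
      rw [norm_mul, Complex.norm_conj]
      calc ‖c‖ * ‖ω z‖ ≤ ‖c‖ * 1 :=
          mul_le_mul_of_nonneg_left hu.le (norm_nonneg _)
        _ = ‖c‖ := mul_one _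
    have h2 : 1 - ‖c‖ ≤ ‖1 - (starRingEnd ℂ) c * ω z‖ := by
      calc 1 - ‖c‖ ≤ 1 - ‖(starRingEnd ℂ) c * ω z‖ := by linarith
        _ ≤ ‖1 - (starRingEnd ℂ) c * ω z‖ := by
            have := norm_sub_norm_le (1:ℂ) ((starRingEnd ℂ) c * ω z)
            simpa using this
    calc (1 - ‖c‖)^2 ≤ ‖1 - (starRingEnd ℂ) c * ω z‖ ^ 2 :=
        pow_le_pow_left₀ (by linarith) h2 2
      _ = Complex.normSq _ := Complex.sq_norm _
  -- combine: (1-|z|²) * normSq d ≤ (1-normSq c)(1-normSq u)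
  have hcomb : (1 - ‖z‖^2) * Complex.normSq (1 - (starRingEnd ℂ) c * ω z)
      ≤ (1 - Complex.normSq c) * (1 - Complex.normSq (ω z)) := by
    nlinarith [Complex.normSq_nonneg (1 - (starRingEnd ℂ) c * ω z)]
  have hc0 : (0:ℝ) ≤ ‖c‖ := norm_nonneg _
  rw [mul_div_assoc'] at *
  rw [div_le_iff₀ (by positivity : (0:ℝ) < 1 + ‖c‖)]
  have hA : (0:ℝ) < 1 - ‖z‖^2 := by nlinarith [norm_nonneg z]
  have step := le_trans (mul_le_mul_of_nonneg_left hdlow hA.le) hcomb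
  nlinarith [Complex.sq_norm c, Complex.sq_norm (ω z), step, norm_nonneg (ω z)]

private lemma coeff_bound {F : ℂ → ℂ} {c : ℕ → ℂ} {r K : ℝ} (hr0 : 0 < r)
    (hsum : ∀ z ∈ ball (0:ℂ) 1, HasSum (fun k => c k * z^k) (F z))
    (hd : DifferentiableOn ℂ (deriv F) (closedBall (0:ℂ) r))
    (hK : ∀ z ∈ closedBall (0:ℂ) r, ‖deriv F z‖ ≤ K) {n : ℕ} (hn : 2 ≤ n) :
    ‖c n‖ * ((n:ℝ) * r^(n-1)) ≤ K := by
  have cb := cauchy_bound hr0 hd hK (n-1)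
  have e1 : iteratedDeriv (n-1) (deriv F) 0 = iteratedDeriv n F 0 := by
    conv_rhs => rw [show n = (n-1)+1 by omega]
    rw [iteratedDeriv_succ']
  rw [e1, coeff_eq hsum n] at cb
  rw [norm_mul] at cb
  have h1 : ‖(n.factorial : ℂ)‖ = (n.factorial : ℝ) := by simp [Complex.norm_natCast]
  rw [h1] at cb
  have hfac : (n.factorial : ℝ) = (n:ℝ) * ((n-1).factorial : ℝ) := by
    rw [show n = (n-1)+1 by omega]
    simp [Nat.factorial_succ]
  rw [hfac] at cb
  have hFpos : (0:ℝ) < ((n-1).factorial : ℝ) := by positivity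
  have hrp : (0:ℝ) < r^(n-1) := pow_pos hr0 _
  have cb2 := mul_le_mul_of_nonneg_right cb hrp.le
  rw [div_mul_cancel₀ _ hrp.ne'] at cb2
  have cb3 : ((n-1).factorial : ℝ) * (‖c n‖ * ((n:ℝ) * r^(n-1)))
      ≤ ((n-1).factorial : ℝ) * K := by
    calc ((n-1).factorial : ℝ) * (‖c n‖ * ((n:ℝ) * r^(n-1)))
        = (n:ℝ) * ((n-1).factorial : ℝ) * ‖c n‖ * r^(n-1) := by
          ring
      _ ≤ ((n-1).factorial : ℝ) * K := cb2
  exact le_of_mul_le_mul_left cb3 hFpos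

set_option maxHeartbeats 1600000 in
/-- Coefficient estimates: if `f = h + conj g` is a sense-preserving harmonic mapping
on `𝔻` with `β*_ν(f) ≤ M`, dilatation `ω_f = g'/h'`, and Taylor expansions
`h(z) = Σ aₙ zⁿ`, `g(z) = Σ bₙ zⁿ`, then `|b₁| < |a₁| ≤ M/√(1 − |ω_f(0)|²)` and for
all `n >= 2`, `max{|aₙ|, |bₙ|} ≤ M (e/(2ν+1))^{ν+1/2} √((1+|ω_f(0)|)/(1−|ω_f(0)|)) (n+2ν)^{ν−1/2}`. -/
theorem coefficient_estimates_Bloch_type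
    (ν : ℝ) (hν : 0 < ν) (h g : ℂ → ℂ) (a b : ℕ → ℂ)
    (hh : DifferentiableOn ℂ h (ball 0 1))
    (hg : DifferentiableOn ℂ g (ball 0 1))
    (hg0 : g 0 = 0)
    (ha : ∀ z ∈ ball (0 : ℂ) 1, HasSum (fun n : ℕ => a n * z ^ n) (h z))
    (hb : ∀ z ∈ ball (0 : ℂ) 1, HasSum (fun n : ℕ => b n * z ^ n) (g z))
    (hsp : ∀ z ∈ ball (0 : ℂ) 1, ‖deriv g z‖ < ‖deriv h z‖)
    (M : ℝ)
    (hM : ∀ z ∈ ball (0 : ℂ) 1,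
      (1 - ‖z‖ ^ 2) ^ ν *
        Real.sqrt |‖deriv h z‖ ^ 2 - ‖deriv g z‖ ^ 2| ≤ M) :
    ‖b 1‖ < ‖a 1‖ ∧
    ‖a 1‖ ≤ M / Real.sqrt (1 - ‖deriv g 0 / deriv h 0‖ ^ 2) ∧
    (∀ n : ℕ, 2 ≤ n →
      max (‖a n‖) (‖b n‖)
        ≤ M * (Real.exp 1 / (2 * ν + 1)) ^ (ν + 1 / 2) *
          Real.sqrt ((1 + ‖deriv g 0 / deriv h 0‖)
            / (1 - ‖deriv g 0 / deriv h 0‖)) *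
          ((n : ℝ) + 2 * ν) ^ (ν - 1 / 2)) := by
  -- basic facts at the origin
  have h0mem : (0:ℂ) ∈ ball (0:ℂ) 1 := by simp
  have hsp0 := hsp 0 h0mem
  have hX0 : 0 < ‖deriv h 0‖ := lt_of_le_of_lt (norm_nonneg _) hsp0
  have hY00 : 0 ≤ ‖deriv g 0‖ := norm_nonneg _
  set w : ℝ := ‖deriv g 0 / deriv h 0‖ with hwdef
  have hwval : w = ‖deriv g 0‖ / ‖deriv h 0‖ := by
    rw [hwdef, norm_div]
  have hw1 : w < 1 := by rw [hwval, div_lt_one hX0]; exact hsp0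
  have hw0 : 0 ≤ w := norm_nonneg _
  -- first Taylor coefficients
  have ha1 : deriv h 0 = a 1 := by
    have := coeff_eq ha 1
    rw [iteratedDeriv_one] at this
    simpa using this
  have hb1 : deriv g 0 = b 1 := by
    have := coeff_eq hb 1
    rw [iteratedDeriv_one] at this
    simpa using this
  -- the value of hM at 0
  have hM0 : Real.sqrt (‖deriv h 0‖^2 - ‖deriv g 0‖^2) ≤ M := by
    have := hM 0 h0mem
    have e0 : ((1:ℝ) - ‖(0:ℂ)‖ ^ 2) ^ ν = 1 := by
      simp [Real.one_rpow]
    rw [e0, one_mul, _root_.abs_of_nonneg (by nlinarith : (0:ℝ) ≤ ‖deriv h 0‖^2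
      - ‖deriv g 0‖^2)] at this
    exact this
  have hMpos : 0 < M := by
    refine lt_of_lt_of_le ?_ hM0
    apply Real.sqrt_pos.2
    nlinarith
  refine ⟨?_, ?_, ?_⟩
  · rw [← ha1, ← hb1]; exact hsp0
  · -- |a 1| ≤ M / sqrt (1 - w²)
    have hsq : 0 < Real.sqrt (1-w^2) := Real.sqrt_pos.2 (by nlinarith)
    rw [le_div_iff₀ hsq, ← ha1]
    have e : ‖deriv h 0‖ * Real.sqrt (1-w^2)
        = Real.sqrt (‖deriv h 0‖^2 - ‖deriv g 0‖^2) := by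
      rw [← Real.sqrt_sq hX0.le, ← Real.sqrt_mul (by positivity)]
      congr 1
      rw [Real.sq_sqrt (sq_nonneg _), hwval]
      field_simp
    rw [e]
    exact hM0
  · -- the coefficient bounds for n ≥ 2
    intro n hn
    have hN2 : (2:ℝ) ≤ (n:ℝ) := by exact_mod_cast hn
    have hA : (0:ℝ) < (n:ℝ) + 2*ν := by linarith
    set s : ℝ := ((n:ℝ)-1)/((n:ℝ)+2*ν) with hsdef
    have hs0 : 0 < s := div_pos (by linarith) hA
    have hs1 : s < 1 := by
      rw [hsdef, div_lt_one hA]; linarith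
    set r : ℝ := Real.sqrt s with hrdef
    have hr0 : 0 < r := Real.sqrt_pos.2 hs0
    have hrs : r^2 = s := Real.sq_sqrt hs0.le
    have hr1 : r < 1 := by nlinarith
    have hr2 : (0:ℝ) < 1 - r^2 := by rw [hrs]; linarith
    have h1s : 1 - r^2 = (2*ν+1)/((n:ℝ)+2*ν) := by
      rw [hrs, hsdef]; field_simp; ring
    -- the dilatation
    have h'ne : ∀ u ∈ ball (0:ℂ) 1, deriv h u ≠ 0 := by
      intro u hu hcontra
      have := hsp u hu
      rw [hcontra] at this
      simp at this
      exact absurd this (not_lt.2 (norm_nonneg _))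
    set ω : ℂ → ℂ := fun u => deriv g u / deriv h u with hωdef
    have hωdiff : DifferentiableOn ℂ ω (ball (0:ℂ) 1) := by
      apply DifferentiableOn.div
      · exact ((hg.analyticOnNhd isOpen_ball).deriv).differentiableOn
      · exact ((hh.analyticOnNhd isOpen_ball).deriv).differentiableOn
      · exact h'ne
    have hωmaps : ∀ u ∈ ball (0:ℂ) 1, ‖ω u‖ < 1 := by
      intro u hu
      rw [hωdef]
      simp only [norm_div]
      rw [div_lt_one (norm_pos_iff.2 (h'ne u hu))]
      exact hsp u hu
    have hω0 : ‖ω 0‖ = w := by rw [hωdef, hwdef]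
    -- the sup bound on the closed ball of radius r
    have hB : ∀ z ∈ closedBall (0:ℂ) r, ‖deriv h z‖ * (1-r^2)^(ν+1/2:ℝ)
        ≤ M * Real.sqrt ((1+w)/(1-w)) := by
      intro z hz
      have hzball : z ∈ ball (0:ℂ) 1 := closedBall_subset_ball hr1 hz
      have hSP := schwarz_pick hωdiff hωmaps hzball
      rw [hω0] at hSP
      set X := ‖deriv h z‖ with hX
      set Y := ‖deriv g z‖ with hY
      have hYX : Y < X := hsp z hzball
      have hXpos : 0 < X := lt_of_le_of_lt (norm_nonneg _) hYX
      have hY0 : 0 ≤ Y := norm_nonneg _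
      have hωz : ‖ω z‖ = Y / X := by rw [hωdef]; simp [norm_div, hX, hY]
      have hzr : ‖z‖ ≤ r := by simpa [mem_closedBall, Complex.dist_eq] using hz
      have hz2 : ‖z‖ ^ 2 ≤ r^2 :=
        pow_le_pow_left₀ (norm_nonneg _) hzr 2
      have hz1 : (0:ℝ) < 1 - ‖z‖^2 := by nlinarith
      have hkey : X^2 * ((1 - ‖z‖^2) * ((1-w)/(1+w))) ≤ X^2 - Y^2 := by
        have h1 : 1 - (Y/X)^2 = (X^2 - Y^2)/X^2 := by field_simp
        rw [hωz, h1] at hSP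
        have h2 := mul_le_mul_of_nonneg_left hSP (sq_nonneg X)
        have h3 : X^2 * ((X^2 - Y^2)/X^2) = X^2 - Y^2 := by field_simp
        rw [h3] at h2
        exact h2
      have hMz := hM z hzball
      have habs : |X^2 - Y^2| = X^2 - Y^2 := _root_.abs_of_nonneg (by nlinarith)
      rw [habs] at hMz
      have hs1' : Real.sqrt (X^2 * ((1 - ‖z‖^2) * ((1-w)/(1+w))))
          ≤ Real.sqrt (X^2-Y^2) := Real.sqrt_le_sqrt hkey
      have hs2 : Real.sqrt (X^2 * ((1 - ‖z‖^2) * ((1-w)/(1+w))))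
          = X * Real.sqrt (1 - ‖z‖^2) * Real.sqrt ((1-w)/(1+w)) := by
        rw [Real.sqrt_mul (by positivity), Real.sqrt_mul hz1.le, Real.sqrt_sq hXpos.le]
        ring
      have hmono : (1-r^2) ^ (ν+1/2:ℝ)
          ≤ (1 - ‖z‖^2)^ν * Real.sqrt (1 - ‖z‖^2) := by
        have e1 : (1 - ‖z‖^2)^ν * Real.sqrt (1 - ‖z‖^2)
            = (1 - ‖z‖^2) ^ (ν+1/2:ℝ) := by
          rw [Real.sqrt_eq_rpow, ← Real.rpow_add hz1]
        rw [e1]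
        exact Real.rpow_le_rpow hr2.le (by nlinarith) (by positivity)
      have hq : X * ((1-r^2) ^ (ν+1/2:ℝ) * Real.sqrt ((1-w)/(1+w))) ≤ M := by
        calc X * ((1-r^2) ^ (ν+1/2:ℝ) * Real.sqrt ((1-w)/(1+w)))
            ≤ X * ((1 - ‖z‖^2)^ν * Real.sqrt (1 - ‖z‖^2)
                * Real.sqrt ((1-w)/(1+w))) := by
              apply mul_le_mul_of_nonneg_left _ hXpos.le
              exact mul_le_mul_of_nonneg_right hmono (Real.sqrt_nonneg _)
          _ = (1 - ‖z‖^2)^ν * (X * Real.sqrt (1 - ‖z‖^2)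
                * Real.sqrt ((1-w)/(1+w))) := by ring
          _ ≤ (1 - ‖z‖^2)^ν * Real.sqrt (X^2-Y^2) := by
              apply mul_le_mul_of_nonneg_left _ (by positivity)
              rw [← hs2]; exact hs1'
          _ ≤ M := hMz
      have hqQ : Real.sqrt ((1-w)/(1+w)) * Real.sqrt ((1+w)/(1-w)) = 1 := by
        rw [← Real.sqrt_mul (div_nonneg (by linarith) (by linarith))]
        rw [show ((1-w)/(1+w))*((1+w)/(1-w)) = 1 by
          have e1 : (1-w) ≠ 0 := by linarith
          have e2 : (1+w) ≠ 0 := by linarith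
          field_simp]
        exact Real.sqrt_one
      calc X * (1-r^2)^(ν+1/2:ℝ)
          = X * ((1-r^2)^(ν+1/2:ℝ) * Real.sqrt ((1-w)/(1+w))) * Real.sqrt ((1+w)/(1-w)) := by
            rw [show X * ((1-r^2)^(ν+1/2:ℝ) * Real.sqrt ((1-w)/(1+w))) * Real.sqrt ((1+w)/(1-w))
              = X * (1-r^2)^(ν+1/2:ℝ) * (Real.sqrt ((1-w)/(1+w)) * Real.sqrt ((1+w)/(1-w)))
              by ring, hqQ, mul_one]
        _ ≤ M * Real.sqrt ((1+w)/(1-w)) :=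
            mul_le_mul_of_nonneg_right hq (Real.sqrt_nonneg _)
    -- Cauchy estimates
    have hpow : (0:ℝ) < (1-r^2)^(ν+1/2:ℝ) := Real.rpow_pos_of_pos hr2 _
    set K : ℝ := M * Real.sqrt ((1+w)/(1-w)) / ((1-r^2)^(ν+1/2:ℝ)) with hKdef
    have hKh : ∀ z ∈ closedBall (0:ℂ) r, ‖deriv h z‖ ≤ K := by
      intro z hz
      rw [hKdef, le_div_iff₀ hpow]
      exact hB z hz
    have hKg : ∀ z ∈ closedBall (0:ℂ) r, ‖deriv g z‖ ≤ K := by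
      intro z hz
      refine le_trans ?_ (hKh z hz)
      exact (hsp z (closedBall_subset_ball hr1 hz)).le
    have hd_h : DifferentiableOn ℂ (deriv h) (closedBall (0:ℂ) r) :=
      ((hh.analyticOnNhd isOpen_ball).deriv.differentiableOn).mono (closedBall_subset_ball hr1)
    have hd_g : DifferentiableOn ℂ (deriv g) (closedBall (0:ℂ) r) :=
      ((hg.analyticOnNhd isOpen_ball).deriv.differentiableOn).mono (closedBall_subset_ball hr1)
    have hA_n : ‖a n‖ * ((n:ℝ) * r^(n-1)) ≤ K := coeff_bound hr0 ha hd_h hKh hn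
    have hB_n : ‖b n‖ * ((n:ℝ) * r^(n-1)) ≤ K := coeff_bound hr0 hb hd_g hKg hn
    -- final optimization
    have final : ∀ x : ℝ, 0 ≤ x → x * ((n:ℝ) * r^(n-1)) ≤ K →
        x ≤ M * (Real.exp 1 / (2 * ν + 1)) ^ (ν + 1/2:ℝ) * Real.sqrt ((1+w)/(1-w)) *
          ((n : ℝ) + 2 * ν) ^ (ν - 1/2:ℝ) := by
      intro x hx hxK
      have hKmul : K * ((1-r^2)^(ν+1/2:ℝ)) = M * Real.sqrt ((1+w)/(1-w)) := by
        rw [hKdef, div_mul_cancel₀ _ hpow.ne']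
      have h1 : x * ((n:ℝ) * r^(n-1) * ((2*ν+1)/((n:ℝ)+2*ν))^(ν+1/2:ℝ))
          ≤ M * Real.sqrt ((1+w)/(1-w)) := by
        calc x * ((n:ℝ) * r^(n-1) * ((2*ν+1)/((n:ℝ)+2*ν))^(ν+1/2:ℝ))
            = (x * ((n:ℝ) * r^(n-1))) * ((1-r^2)^(ν+1/2:ℝ)) := by
              rw [h1s]; ring
          _ ≤ K * ((1-r^2)^(ν+1/2:ℝ)) := mul_le_mul_of_nonneg_right hxK hpow.le
          _ = M * Real.sqrt ((1+w)/(1-w)) := hKmul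
      have hstar := star hν hn
      rw [← hrdef] at hstar
      calc x = x * 1 := (mul_one x).symm
        _ ≤ x * ((Real.exp 1/(2*ν+1))^(ν+1/2:ℝ) * (((n:ℝ)+2*ν)^(ν-1/2:ℝ)
              * ((n:ℝ) * r^(n-1) * ((2*ν+1)/((n:ℝ)+2*ν))^(ν+1/2:ℝ)))) :=
            mul_le_mul_of_nonneg_left hstar hx
        _ = (x * ((n:ℝ) * r^(n-1) * ((2*ν+1)/((n:ℝ)+2*ν))^(ν+1/2:ℝ)))
              * ((Real.exp 1/(2*ν+1))^(ν+1/2:ℝ) * ((n:ℝ)+2*ν)^(ν-1/2:ℝ)) := by ring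
        _ ≤ (M * Real.sqrt ((1+w)/(1-w)))
              * ((Real.exp 1/(2*ν+1))^(ν+1/2:ℝ) * ((n:ℝ)+2*ν)^(ν-1/2:ℝ)) := by
            apply mul_le_mul_of_nonneg_right h1
            positivity
        _ = M * (Real.exp 1 / (2 * ν + 1)) ^ (ν + 1/2:ℝ) * Real.sqrt ((1+w)/(1-w)) *
              ((n : ℝ) + 2 * ν) ^ (ν - 1/2:ℝ) := by ring
    exact max_le (final _ (norm_nonneg _) hA_n) (final _ (norm_nonneg _) hB_n)
end
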